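/- Let X be a proper geodesic δ-hyperbolic space. Let ε, ε' > 0 and b, b' ∈ 𝔅̂(X) be such that X is K-roughly starlike from the basepoints of both b and b', and both ρ_{ε,b} and ρ_{ε',b'} are GH-densities with the same constant M. Then the homeomorphism X_{ε,b} → X_{ε',b'} induced by the identity map on X is ∂-biLipschitz with data (L,λ) depending only on δ, K, ε, ε', M, and is η-quasimöbius with η(t) = C·max{t^{ε'/ε}, t^{ε/ε'}}, where C depends only on δ, K, ε, ε', M. -/

import Mathlib

open Metric Set Filter Topology
open scoped ENNReal Classical

noncomputable section

namespace Paper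

variable {X Y : Type*}

/-- The distance function of a metric space. -/
def distFun (X : Type*) [MetricSpace X] : X → X → ℝ := fun p q => dist p q

/-- `e` is a genuine metric distance function. -/
def IsMetricDist (e : X → X → ℝ) : Prop :=
  (∀ x, e x x = 0) ∧ (∀ x y, x ≠ y → 0 < e x y) ∧ (∀ x y, e x y = e y x) ∧
    ∀ x y z, e x z ≤ e x y + e y z

/-- Cauchy sequence with respect to the distance function `e`. -/
def CauchyWrt (e : X → X → ℝ) (u : ℕ → X) : Prop :=
  ∀ δ : ℝ, 0 < δ → ∃ N : ℕ, ∀ m, N ≤ m → ∀ n, N ≤ n → e (u m) (u n) < δ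

/-- The sequence converges, w.r.t. `e`, to a point of the space. -/
def ConvWrt (e : X → X → ℝ) (u : ℕ → X) : Prop :=
  ∃ y : X, Tendsto (fun n => e (u n) y) atTop (𝓝 0)

/-- The space is incomplete with respect to `e`:
some Cauchy sequence does not converge in the space. -/
def IncompleteWrt (e : X → X → ℝ) : Prop :=
  ∃ u : ℕ → X, CauchyWrt e u ∧ ¬ ConvWrt e u

/-- Distance from `x` to the metric boundary (the completion minus the space),
measured w.r.t. `e`: the infimum of the limits `lim_n e x (u n)` over all Cauchy
sequences `u` that have no limit in the space. -/
def bdryDistWrt (e : X → X → ℝ) (x : X) : ℝ :=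
  sInf { r : ℝ | ∃ u : ℕ → X, CauchyWrt e u ∧ ¬ ConvWrt e u ∧
    Tendsto (fun n => e x (u n)) atTop (𝓝 r) }

/-- Sequential compactness of a set w.r.t. `e`. -/
def SeqCompactWrt (e : X → X → ℝ) (s : Set X) : Prop :=
  ∀ u : ℕ → X, (∀ n, u n ∈ s) → ∃ y ∈ s, ∃ φ : ℕ → ℕ, StrictMono φ ∧
    Tendsto (fun n => e (u (φ n)) y) atTop (𝓝 0)

/-- Local compactness w.r.t. `e`: every point has arbitrarily small compact closed balls. -/
def LocallyCompactWrt (e : X → X → ℝ) : Prop :=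
  ∀ x : X, ∀ r : ℝ, 0 < r → ∃ r' : ℝ, 0 < r' ∧ r' ≤ r ∧ SeqCompactWrt e { y | e x y ≤ r' }

/-- Continuity of a curve on a set of parameters, w.r.t. `e`. -/
def ContinuousOnWrt (e : X → X → ℝ) (γ : ℝ → X) (I : Set ℝ) : Prop :=
  ∀ t ∈ I, ∀ δ : ℝ, 0 < δ → ∃ η : ℝ, 0 < η ∧ ∀ s ∈ I, |s - t| < η → e (γ s) (γ t) < δ

/-- The length (total variation) of the curve `γ` on the parameter set `I`, w.r.t. `e`. -/
def varOn (e : X → X → ℝ) (γ : ℝ → X) (I : Set ℝ) : ℝ≥0∞ :=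
  ⨆ p : ℕ × { u : ℕ → ℝ // Monotone u ∧ ∀ i, u i ∈ I },
    ∑ i ∈ Finset.range p.1, ENNReal.ofReal (e (γ (p.2.1 (i + 1))) (γ (p.2.1 i)))

/-- `X` with distance `e` is an `A`-uniform metric space: it is a locally compact,
incomplete metric space any two of whose points are joined by an `A`-uniform curve. -/
def IsUniformSpcWrt (e : X → X → ℝ) (A : ℝ) : Prop :=
  IsMetricDist e ∧ LocallyCompactWrt e ∧ IncompleteWrt e ∧
  ∀ x y : X, ∃ (a b : ℝ) (γ : ℝ → X), a ≤ b ∧ ContinuousOnWrt e γ (Icc a b) ∧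
    γ a = x ∧ γ b = y ∧
    varOn e γ (Icc a b) ≤ ENNReal.ofReal (A * e x y) ∧
    ∀ t ∈ Icc a b, min (varOn e γ (Icc a t)) (varOn e γ (Icc t b)) ≤
      ENNReal.ofReal (A * bdryDistWrt e (γ t))

/-- `f` is `∂`-Lipschitz with data `(L, lam)`. -/
def PartialLipschitzWrt (e : X → X → ℝ) (e' : Y → Y → ℝ) (L lam : ℝ) (f : X → Y) : Prop :=
  ∀ x y z : X, e y x < lam * bdryDistWrt e x → e z x < lam * bdryDistWrt e x →
    e' (f y) (f z) / bdryDistWrt e' (f x) ≤ L * (e y z / bdryDistWrt e x)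

/-- `f` (with inverse `g`) is `∂`-biLipschitz with data `(L, lam)`. -/
def PartialBiLipschitzWrt (e : X → X → ℝ) (e' : Y → Y → ℝ) (L lam : ℝ)
    (f : X → Y) (g : Y → X) : Prop :=
  1 ≤ L ∧ Function.LeftInverse g f ∧ Function.RightInverse g f ∧
    PartialLipschitzWrt e e' L lam f ∧ PartialLipschitzWrt e' e L lam g

/-- Cross-ratio of a quadruple of points, w.r.t. `e`. -/
def crossRatioWrt (e : X → X → ℝ) (x y z w : X) : ℝ := e x z * e y w / (e x y * e z w)

/-- `f` is `η`-quasimöbius. -/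
def QuasiMobiusWrt (e : X → X → ℝ) (e' : Y → Y → ℝ) (η : ℝ → ℝ) (f : X → Y) : Prop :=
  ∀ x y z w : X, x ≠ y → x ≠ z → x ≠ w → y ≠ z → y ≠ w → z ≠ w →
    crossRatioWrt e' (f x) (f y) (f z) (f w) ≤ η (crossRatioWrt e x y z w)

/-- `f` is `η`-quasisymmetric. -/
def QuasiSymmetricWrt (e : X → X → ℝ) (e' : Y → Y → ℝ) (η : ℝ → ℝ) (f : X → Y) : Prop :=
  ∀ x y z : X, ∀ t : ℝ, 0 ≤ t → e x y ≤ t * e x z → e' (f x) (f y) ≤ η t * e' (f x) (f z)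

/-- `η` is (the restriction to `[0,∞)` of) a self-homeomorphism of `[0,∞)`:
continuous, strictly increasing, fixing `0`, and tending to `∞`. -/
def IsControlFun (η : ℝ → ℝ) : Prop :=
  ContinuousOn η (Ici 0) ∧ StrictMonoOn η (Ici 0) ∧ η 0 = 0 ∧ Tendsto η atTop atTop

/-- The conformal deformation distance with conformal factor `ρ`: the infimum of
`∫ ρ ∘ γ` over all `1`-Lipschitz (w.r.t. `e`) curves joining `x` to `y`
(equivalently, the infimum of `∫_γ ρ ds` over all rectifiable curves joining `x` to `y`). -/
def confDistWrt (e : X → X → ℝ) (ρ : X → ℝ) (x y : X) : ℝ :=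
  sInf { l : ℝ | ∃ (T : ℝ) (γ : ℝ → X), 0 ≤ T ∧
    (∀ s ∈ Icc 0 T, ∀ t ∈ Icc 0 T, e (γ s) (γ t) ≤ |s - t|) ∧
    γ 0 = x ∧ γ T = y ∧ l = ∫ t in (0:ℝ)..T, ρ (γ t) }

/-- The quasihyperbolic metric of the space with distance `e`. -/
def quasiHypWrt (e : X → X → ℝ) : X → X → ℝ :=
  confDistWrt e fun z => (bdryDistWrt e z)⁻¹

/-- `γ` is a geodesic segment from `x` to `y`, parametrized by arclength on `[0, e x y]`. -/
def IsGeodesicSegWrt (e : X → X → ℝ) (γ : ℝ → X) (x y : X) : Prop :=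
  γ 0 = x ∧ γ (e x y) = y ∧
    ∀ s ∈ Icc 0 (e x y), ∀ t ∈ Icc 0 (e x y), e (γ s) (γ t) = |s - t|

/-- Any two points are joined by a geodesic. -/
def GeodesicSpaceWrt (e : X → X → ℝ) : Prop := ∀ x y : X, ∃ γ : ℝ → X, IsGeodesicSegWrt e γ x y

/-- The image of a geodesic segment. -/
def segImageWrt (e : X → X → ℝ) (γ : ℝ → X) (x y : X) : Set X := γ '' Icc 0 (e x y)

/-- `δ`-hyperbolicity: every geodesic triangle is `δ`-thin. -/
def DeltaHyperbolicWrt (e : X → X → ℝ) (δ : ℝ) : Prop :=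
  ∀ (x y z : X) (γ₁ γ₂ γ₃ : ℝ → X),
    IsGeodesicSegWrt e γ₁ x y → IsGeodesicSegWrt e γ₂ y z → IsGeodesicSegWrt e γ₃ z x →
    (∀ p ∈ segImageWrt e γ₁ x y, ∃ q ∈ segImageWrt e γ₂ y z ∪ segImageWrt e γ₃ z x, e p q ≤ δ) ∧
    (∀ p ∈ segImageWrt e γ₂ y z, ∃ q ∈ segImageWrt e γ₁ x y ∪ segImageWrt e γ₃ z x, e p q ≤ δ) ∧
    (∀ p ∈ segImageWrt e γ₃ z x, ∃ q ∈ segImageWrt e γ₁ x y ∪ segImageWrt e γ₂ y z, e p q ≤ δ)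

/-- `γ` is a geodesic ray (defined on `[0,∞)`). -/
def IsGeodesicRayWrt (e : X → X → ℝ) (γ : ℝ → X) : Prop :=
  ∀ s ∈ Ici (0:ℝ), ∀ t ∈ Ici (0:ℝ), e (γ s) (γ t) = |s - t|

/-- `γ` is a geodesic line. -/
def IsGeodesicLineWrt (e : X → X → ℝ) (γ : ℝ → X) : Prop :=
  ∀ s t : ℝ, e (γ s) (γ t) = |s - t|

/-- Two rays are at bounded distance from each other (represent the same
point of the Gromov boundary). -/
def RayEquivWrt (e : X → X → ℝ) (γ σ : ℝ → X) : Prop :=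
  ∃ c : ℝ, ∀ t ∈ Ici (0:ℝ), e (γ t) (σ t) ≤ c

/-- The infimal distance from `x` to the set `s`, w.r.t. `e`. -/
def infDistWrt (e : X → X → ℝ) (x : X) (s : Set X) : ℝ := sInf (e x '' s)

/-- `X` is `K`-roughly starlike from the point `z`. -/
def RoughStarlikeFromPointWrt (e : X → X → ℝ) (K : ℝ) (z : X) : Prop :=
  ∀ x : X, ∃ γ : ℝ → X, IsGeodesicRayWrt e γ ∧ γ 0 = z ∧ infDistWrt e x (γ '' Ici 0) ≤ K

/-- `X` is `K`-roughly starlike from the Gromov boundary point represented by the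
geodesic ray `ρ`: every point lies within distance `K` of a geodesic line starting
from that boundary point. -/
def RoughStarlikeFromRayWrt (e : X → X → ℝ) (K : ℝ) (ρ : ℝ → X) : Prop :=
  ∀ x : X, ∃ γ : ℝ → X, IsGeodesicLineWrt e γ ∧ RayEquivWrt e (fun t => γ (-t)) ρ ∧
    infDistWrt e x (range γ) ≤ K

/-- The Busemann function of the geodesic ray `ρ`:
`b_ρ(x) = lim_{t→∞} (e (ρ t) x - t) = inf_{t ≥ 0} (e (ρ t) x - t)`. -/
def busemannWrt (e : X → X → ℝ) (ρ : ℝ → X) (x : X) : ℝ :=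
  sInf ((fun t => e (ρ t) x - t) '' Ici 0)

/-- `b ∈ 𝔅̂(X)` (either a translated distance function or a translated Busemann
function), and `X` is `K`-roughly starlike from the basepoint of `b`. -/
def BhatStarlike (e : X → X → ℝ) (K : ℝ) (b : X → ℝ) : Prop :=
  (∃ (z : X) (s : ℝ), (∀ x, b x = e x z + s) ∧ RoughStarlikeFromPointWrt e K z) ∨
  (∃ (ρ : ℝ → X) (s : ℝ), IsGeodesicRayWrt e ρ ∧ (∀ x, b x = busemannWrt e ρ x + s) ∧
    RoughStarlikeFromRayWrt e K ρ)

/-- `ρ` is a Gehring–Hayman density with constant `M`: the `ρ`-length of any geodesic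
is at most `M` times the conformal distance between its endpoints. -/
def IsGHDensityWrt (e : X → X → ℝ) (M : ℝ) (ρ : X → ℝ) : Prop :=
  ∀ (x y : X) (γ : ℝ → X), IsGeodesicSegWrt e γ x y →
    (∫ t in (0:ℝ)..(e x y), ρ (γ t)) ≤ M * confDistWrt e ρ x y

/-- The density `ρ_{ε,b}(x) = e^{-ε b(x)}`. -/
def uniformizationDensity (b : X → ℝ) (ε : ℝ) : X → ℝ := fun x => Real.exp (-ε * b x)

/-- The Gromov product of `x` and `y` based at `z`. -/
def gromovProdWrt (e : X → X → ℝ) (z x y : X) : ℝ := (e x z + e y z - e x y) / 2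

/-- The sequence `u` represents the Gromov boundary point of the geodesic ray `ρ`
(with respect to the basepoint `z`). -/
def SeqRepWrt (e : X → X → ℝ) (z : X) (ρ : ℝ → X) (u : ℕ → X) : Prop :=
  Tendsto (fun n => gromovProdWrt e z (u n) (ρ n)) atTop atTop

/-- The Gromov product, based at `z`, of the two boundary points represented by the
geodesic rays `ρ` and `σ` (valued in `[0,∞]`). -/
def bGromovProdWrt (e : X → X → ℝ) (z : X) (ρ σ : ℝ → X) : ℝ≥0∞ :=
  ⨅ (u : { u : ℕ → X // SeqRepWrt e z ρ u }) (v : { v : ℕ → X // SeqRepWrt e z σ v }),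
    Filter.liminf (fun n => ENNReal.ofReal (gromovProdWrt e z (u.1 n) (v.1 n))) atTop

/-- `S(x) = sup_{ω ∈ ∂X} inf_{ξ ∈ ∂X} (ω|ξ)_x`. -/
def Sfun (e : X → X → ℝ) (x : X) : ℝ≥0∞ :=
  ⨆ (ω : { ρ : ℝ → X // IsGeodesicRayWrt e ρ }),
    ⨅ (ξ : { ρ : ℝ → X // IsGeodesicRayWrt e ρ }), bGromovProdWrt e x ω.1 ξ.1

/-- The filter at the left end of the interval `I`. -/
def leftEndFilter (I : Set ℝ) : Filter ℝ :=
  if BddBelow I then 𝓝[I] (sInf I) else atBot ⊓ 𝓟 I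

/-- The filter at the right end of the interval `I`. -/
def rightEndFilter (I : Set ℝ) : Filter ℝ :=
  if BddAbove I then 𝓝[I] (sSup I) else atTop ⊓ 𝓟 I

/-- `γ : I → Ω` is an `A`-uniform curve: it is rectifiable with endpoints
`γ₋, γ₊` in the completion `Ω̄` satisfying `ℓ(γ) ≤ A d(γ₋,γ₊)` (or non-rectifiable with
`d(γ(s),γ(t)) → ∞` towards the endpoints of `I`), and at every time `t` the shorter of
the two subcurves has length at most `A d_Ω(γ(t))`. -/
def IsUniformCurve {Ω : Type*} [MetricSpace Ω] (A : ℝ) (γ : ℝ → Ω) (I : Set ℝ) : Prop :=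
  I.Nonempty ∧ I.OrdConnected ∧ ContinuousOn γ I ∧
  ((varOn (distFun Ω) γ I ≠ ⊤ ∧
     ∃ gm gp : UniformSpace.Completion Ω,
       Tendsto (fun t => (γ t : UniformSpace.Completion Ω)) (leftEndFilter I) (𝓝 gm) ∧
       Tendsto (fun t => (γ t : UniformSpace.Completion Ω)) (rightEndFilter I) (𝓝 gp) ∧
       varOn (distFun Ω) γ I ≤ ENNReal.ofReal (A * dist gm gp)) ∨
   (varOn (distFun Ω) γ I = ⊤ ∧
     Tendsto (fun pq : ℝ × ℝ => dist (γ pq.1) (γ pq.2))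
       (leftEndFilter I ×ˢ rightEndFilter I) atTop)) ∧
  ∀ t ∈ I, min (varOn (distFun Ω) γ (I ∩ Iic t)) (varOn (distFun Ω) γ (I ∩ Ici t)) ≤
    ENNReal.ofReal (A * bdryDistWrt (distFun Ω) (γ t))

/-! ### Auxiliary development -/

section Aux
set_option linter.unusedSectionVars false

variable {X : Type*} [MetricSpace X]

private lemma bLip {b : X → ℝ} (hb1 : ∀ x y : X, b x ≤ b y + dist x y) :
    ∀ x y : X, |b x - b y| ≤ dist x y := by
  intro x y
  rw [abs_sub_le_iff]
  refine ⟨by linarith [hb1 x y], ?_⟩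
  have := hb1 y x
  rw [dist_comm y x] at this
  linarith

private lemma bCont {b : X → ℝ} (hb1 : ∀ x y : X, b x ≤ b y + dist x y) :
    Continuous b := by
  have : LipschitzWith 1 b := by
    apply LipschitzWith.of_dist_le_mul
    intro x y
    simpa [Real.dist_eq] using bLip hb1 x y
  exact this.continuous

private lemma geo_dist {γ : ℝ → X} {x y : X} (hγ : IsGeodesicSegWrt (distFun X) γ x y)
    {s t : ℝ} (hs : s ∈ Icc 0 (dist x y)) (ht : t ∈ Icc 0 (dist x y)) :
    dist (γ s) (γ t) = |s - t| :=
  hγ.2.2 s hs t ht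

private lemma geo_start {γ : ℝ → X} {x y : X} (hγ : IsGeodesicSegWrt (distFun X) γ x y) :
    γ 0 = x := hγ.1

private lemma geo_end {γ : ℝ → X} {x y : X} (hγ : IsGeodesicSegWrt (distFun X) γ x y) :
    γ (dist x y) = y := hγ.2.1

private lemma geo_cont {γ : ℝ → X} {x y : X} (hγ : IsGeodesicSegWrt (distFun X) γ x y) :
    ContinuousOn γ (Icc 0 (dist x y)) := by
  have : LipschitzOnWith 1 γ (Icc 0 (dist x y)) := by
    apply LipschitzOnWith.of_dist_le_mul
    intro s hs t ht
    rw [geo_dist hγ hs ht]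
    simp [Real.dist_eq]
  exact this.continuousOn

/-- The defining set for the conformal distance. -/
private def CS (b : X → ℝ) (ε : ℝ) (x y : X) : Set ℝ :=
  { l : ℝ | ∃ (T : ℝ) (γ : ℝ → X), 0 ≤ T ∧
    (∀ s ∈ Icc 0 T, ∀ t ∈ Icc 0 T, distFun X (γ s) (γ t) ≤ |s - t|) ∧
    γ 0 = x ∧ γ T = y ∧ l = ∫ t in (0:ℝ)..T, uniformizationDensity b ε (γ t) }

private lemma conf_eq (b : X → ℝ) (ε : ℝ) (x y : X) :
    confDistWrt (distFun X) (uniformizationDensity b ε) x y = sInf (CS b ε x y) := rfl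

private lemma dens_pos (b : X → ℝ) (ε : ℝ) (z : X) : 0 < uniformizationDensity b ε z :=
  Real.exp_pos _

private lemma CS_nonneg {b : X → ℝ} {ε : ℝ} {x y : X} : ∀ l ∈ CS b ε x y, (0:ℝ) ≤ l := by
  rintro l ⟨T, γ, hT, hlip, h0, hT', rfl⟩
  exact intervalIntegral.integral_nonneg hT (fun u _ => (dens_pos b ε (γ u)).le)

private lemma CS_bdd {b : X → ℝ} {ε : ℝ} {x y : X} : BddBelow (CS b ε x y) :=
  ⟨0, fun l hl => CS_nonneg l hl⟩

private lemma geo_mem_CS {b : X → ℝ} {ε : ℝ} {x y : X} {γ : ℝ → X}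
    (hγ : IsGeodesicSegWrt (distFun X) γ x y) :
    (∫ t in (0:ℝ)..(dist x y), uniformizationDensity b ε (γ t)) ∈ CS b ε x y :=
  ⟨dist x y, γ, dist_nonneg, fun s hs t ht => le_of_eq (hγ.2.2 s hs t ht), hγ.1, hγ.2.1, rfl⟩

private lemma conf_nonneg (b : X → ℝ) (ε : ℝ) (x y : X) :
    0 ≤ confDistWrt (distFun X) (uniformizationDensity b ε) x y := by
  rw [conf_eq]; exact Real.sInf_nonneg (fun l hl => CS_nonneg l hl)

private lemma conf_le_geo {b : X → ℝ} {ε : ℝ} {x y : X} {γ : ℝ → X}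
    (hγ : IsGeodesicSegWrt (distFun X) γ x y) :
    confDistWrt (distFun X) (uniformizationDensity b ε) x y ≤
      ∫ t in (0:ℝ)..(dist x y), uniformizationDensity b ε (γ t) := by
  rw [conf_eq]; exact csInf_le CS_bdd (geo_mem_CS hγ)

private lemma conf_self (b : X → ℝ) (ε : ℝ) (x : X) :
    confDistWrt (distFun X) (uniformizationDensity b ε) x x = 0 := by
  refine le_antisymm ?_ (conf_nonneg b ε x x)
  rw [conf_eq]
  refine csInf_le CS_bdd ⟨0, (fun _ => x), le_refl 0, ?_, rfl, rfl, by simp⟩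
  intro s hs t ht
  simp only [distFun, dist_self]
  exact abs_nonneg _

/-- Integrability of the density along a `1`-Lipschitz curve. -/
private lemma integrable_dens {b : X → ℝ} (hb1 : ∀ x y : X, b x ≤ b y + dist x y)
    {ε : ℝ} {γ : ℝ → X} {T₀ T₁ : ℝ} (hT : T₀ ≤ T₁)
    (hγc : ContinuousOn γ (Icc T₀ T₁)) :
    IntervalIntegrable (fun t => uniformizationDensity b ε (γ t))
      MeasureTheory.volume T₀ T₁ := by
  apply ContinuousOn.intervalIntegrable
  rw [uIcc_of_le hT]
  exact (Real.continuous_exp.comp (continuous_const.mul (bCont hb1))).comp_continuousOn hγc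

private lemma lip_continuousOn {γ : ℝ → X} {T : ℝ}
    (hlip : ∀ s ∈ Icc (0:ℝ) T, ∀ t ∈ Icc (0:ℝ) T, distFun X (γ s) (γ t) ≤ |s - t|) :
    ContinuousOn γ (Icc 0 T) := by
  have : LipschitzOnWith 1 γ (Icc 0 T) := by
    apply LipschitzOnWith.of_dist_le_mul
    intro s hs t ht
    have h := hlip s hs t ht
    simp only [distFun] at h
    simpa [Real.dist_eq] using h
  exact this.continuousOn

/-- `∫_{0}^{T} e^{-ε (c+t)} dt`. -/
private lemma intExp (ε c T : ℝ) (hε : 0 < ε) :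
    ∫ t in (0:ℝ)..T, Real.exp (-ε * (c + t)) =
      (Real.exp (-ε * c) - Real.exp (-ε * (c + T))) / ε := by
  have h : ∀ t : ℝ, HasDerivAt (fun u : ℝ => Real.exp (-ε * (c + u)) / -ε)
      (Real.exp (-ε * (c + t))) t := by
    intro t
    have h1 : HasDerivAt (fun u : ℝ => -ε * (c + u)) (-ε) t := by
      simpa using ((hasDerivAt_id t).const_add c).const_mul (-ε)
    have h2 : HasDerivAt (fun u : ℝ => Real.exp (-ε * (c + u)))
        (Real.exp (-ε * (c + t)) * (-ε)) t := (Real.hasDerivAt_exp _).comp t h1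
    have h3 := h2.div_const (-ε)
    have h4 : Real.exp (-ε * (c + t)) * -ε / -ε = Real.exp (-ε * (c + t)) := by
      field_simp
    rwa [h4] at h3
  rw [intervalIntegral.integral_eq_sub_of_hasDerivAt (fun t _ => h t)
    (Continuous.intervalIntegrable (by continuity) _ _)]
  field_simp [hε.ne']
  ring

end Aux
section Aux2
set_option linter.unusedSectionVars false

variable {X : Type*} [MetricSpace X]

/-- Midpoint quantity `B(x,y) = (b x + b y - d(x,y))/2`. -/
private def Bq (b : X → ℝ) (x y : X) : ℝ := (b x + b y - dist x y) / 2

/-- `min 1 u / 2 ≤ 1 - e^{-u}` for `u ≥ 0`. -/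
private lemma one_sub_exp {u : ℝ} (hu : 0 ≤ u) : min 1 u / 2 ≤ 1 - Real.exp (-u) := by
  rcases le_total 1 u with h | h
  · rw [min_eq_left h]
    have h2 : Real.exp (-u) ≤ Real.exp (-1) := Real.exp_le_exp.mpr (by linarith)
    have h3 : Real.exp (-1) ≤ 1/2 := by
      rw [Real.exp_neg]
      rw [inv_le_comm₀ (Real.exp_pos 1) (by norm_num)]
      have := Real.add_one_le_exp 1
      linarith
    linarith
  · rw [min_eq_right h]
    have h1 : Real.exp (-u) ≤ 1 / (1 + u) := by
      rw [Real.exp_neg]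
      have h2 : 1 + u ≤ Real.exp u := by linarith [Real.add_one_le_exp u]
      have h3 : 0 < 1 + u := by linarith
      rw [inv_eq_one_div]
      exact div_le_div_of_nonneg_left (by norm_num) h3 h2
    have h4 : 1 / (1 + u) ≤ 1 - u / 2 := by
      rw [div_le_iff₀ (by linarith : (0:ℝ) < 1 + u)]
      nlinarith
    linarith

private lemma CS_symm (b : X → ℝ) (ε : ℝ) (x y : X) : CS b ε x y = CS b ε y x := by
  have key : ∀ u v : X, CS b ε u v ⊆ CS b ε v u := by
    rintro u v l ⟨T, γ, hT, hlip, h0, hT', rfl⟩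
    refine ⟨T, fun t => γ (T - t), hT, ?_, by simp [hT'], by simp [h0], ?_⟩
    · intro s hs t ht
      have h := hlip (T - s) ⟨by linarith [hs.2], by linarith [hs.1]⟩
        (T - t) ⟨by linarith [ht.2], by linarith [ht.1]⟩
      calc distFun X (γ (T - s)) (γ (T - t)) ≤ |T - s - (T - t)| := h
        _ = |s - t| := by rw [abs_sub_comm]; ring_nf
    · rw [intervalIntegral.integral_comp_sub_left
        (fun t => uniformizationDensity b ε (γ t)) T]
      simp
  exact le_antisymm (key x y) (key y x)

private lemma conf_symm (b : X → ℝ) (ε : ℝ) (x y : X) :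
    confDistWrt (distFun X) (uniformizationDensity b ε) x y =
    confDistWrt (distFun X) (uniformizationDensity b ε) y x := by
  rw [conf_eq, conf_eq, CS_symm]

private lemma CS_nonempty {b : X → ℝ} {ε : ℝ} (hgs : GeodesicSpaceWrt (distFun X)) (x y : X) :
    (CS (X := X) b ε x y).Nonempty := by
  obtain ⟨γ, hγ⟩ := hgs x y
  exact ⟨_, geo_mem_CS hγ⟩

/-- The triangle inequality for the conformal distance. -/
private lemma conf_triangle {b : X → ℝ} {ε : ℝ} (hb1 : ∀ x y : X, b x ≤ b y + dist x y)
    (hgs : GeodesicSpaceWrt (distFun X)) (x y z : X) :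
    confDistWrt (distFun X) (uniformizationDensity b ε) x z ≤
      confDistWrt (distFun X) (uniformizationDensity b ε) x y +
      confDistWrt (distFun X) (uniformizationDensity b ε) y z := by
  have key : ∀ l₁ ∈ CS b ε x y, ∀ l₂ ∈ CS b ε y z, sInf (CS b ε x z) ≤ l₁ + l₂ := by
    rintro l₁ ⟨T₁, γ₁, hT₁, hlip₁, h0₁, hT'₁, rfl⟩ l₂ ⟨T₂, γ₂, hT₂, hlip₂, h0₂, hT'₂, rfl⟩
    set γ : ℝ → X := fun t => if t ≤ T₁ then γ₁ t else γ₂ (t - T₁) with hγdef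
    have hT : 0 ≤ T₁ + T₂ := by linarith
    have hmain : ∀ s ∈ Icc 0 (T₁ + T₂), ∀ t ∈ Icc 0 (T₁ + T₂), s ≤ t →
        dist (γ s) (γ t) ≤ t - s := by
      intro s hs t ht hst
      by_cases htT : t ≤ T₁
      · have hsT : s ≤ T₁ := le_trans hst htT
        simp only [hγdef, if_pos hsT, if_pos htT]
        have := hlip₁ s ⟨hs.1, hsT⟩ t ⟨ht.1, htT⟩
        simp only [distFun] at this
        calc dist (γ₁ s) (γ₁ t) ≤ |s - t| := this
          _ = t - s := by rw [abs_sub_comm, abs_of_nonneg (by linarith)]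
      · push_neg at htT
        by_cases hsT : s ≤ T₁
        · simp only [hγdef, if_pos hsT, if_neg (not_le.mpr htT)]
          have h1 := hlip₁ s ⟨hs.1, hsT⟩ T₁ ⟨hT₁, le_refl _⟩
          have h2 := hlip₂ 0 ⟨le_refl _, hT₂⟩ (t - T₁) ⟨by linarith, by linarith [ht.2]⟩
          simp only [distFun] at h1 h2
          calc dist (γ₁ s) (γ₂ (t - T₁))
              ≤ dist (γ₁ s) (γ₁ T₁) + dist (γ₂ 0) (γ₂ (t - T₁)) := by
                rw [hT'₁, ← h0₂]; exact dist_triangle _ _ _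
            _ ≤ |s - T₁| + |0 - (t - T₁)| := add_le_add h1 h2
            _ = t - s := by
                rw [abs_sub_comm s T₁, abs_of_nonneg (by linarith),
                  abs_sub_comm, abs_of_nonneg (by linarith)]
                ring
        · push_neg at hsT
          simp only [hγdef, if_neg (not_le.mpr hsT), if_neg (not_le.mpr htT)]
          have := hlip₂ (s - T₁) ⟨by linarith, by linarith [hs.2]⟩
            (t - T₁) ⟨by linarith, by linarith [ht.2]⟩
          simp only [distFun] at this
          calc dist (γ₂ (s - T₁)) (γ₂ (t - T₁)) ≤ |s - T₁ - (t - T₁)| := this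
            _ = t - s := by rw [abs_sub_comm, abs_of_nonneg (by linarith)]; ring_nf
    have hγc₁ : ContinuousOn γ (Icc 0 T₁) := by
      apply ContinuousOn.congr (lip_continuousOn hlip₁)
      intro t htmem
      simp only [hγdef, if_pos htmem.2]
    have hγc₂ : ContinuousOn γ (Icc T₁ (T₁ + T₂)) := by
      have hcont2 : ContinuousOn (fun t => γ₂ (t - T₁)) (Icc T₁ (T₁ + T₂)) := by
        apply (lip_continuousOn hlip₂).comp (by fun_prop)
        intro t htmem
        simp only [mem_Icc]
        exact ⟨by linarith [htmem.1], by linarith [htmem.2]⟩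
      apply ContinuousOn.congr hcont2
      intro t htmem
      by_cases h : t ≤ T₁
      · have ht' : t = T₁ := le_antisymm h htmem.1
        subst ht'
        simp [hγdef, hT'₁, h0₂]
      · simp only [hγdef, if_neg h]
    have hI₁ : IntervalIntegrable (fun t => uniformizationDensity b ε (γ t))
        MeasureTheory.volume 0 T₁ := integrable_dens hb1 hT₁ hγc₁
    have hI₂ : IntervalIntegrable (fun t => uniformizationDensity b ε (γ t))
        MeasureTheory.volume T₁ (T₁ + T₂) :=
      integrable_dens hb1 (by linarith : T₁ ≤ T₁ + T₂) hγc₂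
    have hsplit : (∫ t in (0:ℝ)..(T₁ + T₂), uniformizationDensity b ε (γ t)) =
        (∫ t in (0:ℝ)..T₁, uniformizationDensity b ε (γ t)) +
        (∫ t in T₁..(T₁ + T₂), uniformizationDensity b ε (γ t)) :=
      (intervalIntegral.integral_add_adjacent_intervals hI₁ hI₂).symm
    have he₁ : (∫ t in (0:ℝ)..T₁, uniformizationDensity b ε (γ t)) =
        ∫ t in (0:ℝ)..T₁, uniformizationDensity b ε (γ₁ t) := by
      apply intervalIntegral.integral_congr
      intro t htmem
      rw [uIcc_of_le hT₁] at htmem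
      simp only [hγdef, if_pos htmem.2]
    have he₂ : (∫ t in T₁..(T₁ + T₂), uniformizationDensity b ε (γ t)) =
        ∫ t in (0:ℝ)..T₂, uniformizationDensity b ε (γ₂ t) := by
      have step : (∫ t in T₁..(T₁ + T₂), uniformizationDensity b ε (γ t)) =
          ∫ t in T₁..(T₁ + T₂), uniformizationDensity b ε (γ₂ (t - T₁)) := by
        apply intervalIntegral.integral_congr
        intro t htmem
        rw [uIcc_of_le (by linarith : T₁ ≤ T₁ + T₂)] at htmem
        by_cases h : t ≤ T₁
        · have ht' : t = T₁ := le_antisymm h htmem.1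
          subst ht'
          simp [hγdef, hT'₁, h0₂]
        · simp only [hγdef, if_neg h]
      rw [step, intervalIntegral.integral_comp_sub_right
        (fun u => uniformizationDensity b ε (γ₂ u)) T₁]
      norm_num
    have hmem : ((∫ t in (0:ℝ)..T₁, uniformizationDensity b ε (γ₁ t)) +
        (∫ t in (0:ℝ)..T₂, uniformizationDensity b ε (γ₂ t))) ∈ CS b ε x z := by
      refine ⟨T₁ + T₂, γ, hT, ?_, ?_, ?_, by rw [hsplit, he₁, he₂]⟩
      · intro s hs t ht
        rcases le_total s t with h | h
        · have := hmain s hs t ht h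
          simp only [distFun]
          calc dist (γ s) (γ t) ≤ t - s := this
            _ ≤ |s - t| := by rw [abs_sub_comm]; exact le_abs_self _
        · have := hmain t ht s hs h
          simp only [distFun]
          rw [dist_comm]
          calc dist (γ t) (γ s) ≤ s - t := this
            _ ≤ |s - t| := le_abs_self _
      · simp only [hγdef, if_pos hT₁, h0₁]
      · by_cases h : T₁ + T₂ ≤ T₁
        · have hT₂0 : T₂ = 0 := le_antisymm (by linarith) hT₂
          subst hT₂0
          have hyz : y = z := by rw [← h0₂, hT'₂]
          simp [hγdef, hT'₁, hyz]
        · simp only [hγdef, if_neg h, add_sub_cancel_left, hT'₂]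
    exact csInf_le CS_bdd hmem
  rw [conf_eq, conf_eq, conf_eq]
  have h2 : ∀ l₂ ∈ CS b ε y z, sInf (CS (X := X) b ε x z) - l₂ ≤ sInf (CS b ε x y) := by
    intro l₂ hl₂
    apply le_csInf (CS_nonempty hgs x y)
    intro l₁ hl₁
    linarith [key l₁ hl₁ l₂ hl₂]
  have h3 : sInf (CS (X := X) b ε x z) - sInf (CS b ε x y) ≤ sInf (CS b ε y z) := by
    apply le_csInf (CS_nonempty hgs y z)
    intro l₂ hl₂
    linarith [h2 l₂ hl₂]
  linarith

end Aux2
section Aux3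
set_option linter.unusedSectionVars false
set_option maxHeartbeats 1000000

variable {X : Type*} [MetricSpace X]

private lemma b_geo_ge {b : X → ℝ} (hb1 : ∀ x y : X, b x ≤ b y + dist x y)
    {γ : ℝ → X} {x y : X} (hγ : IsGeodesicSegWrt (distFun X) γ x y)
    {t : ℝ} (ht : t ∈ Icc 0 (dist x y)) :
    b x - t ≤ b (γ t) ∧ b y - (dist x y - t) ≤ b (γ t) := by
  have h0 : (0:ℝ) ∈ Icc 0 (dist x y) := ⟨le_rfl, dist_nonneg⟩
  have hd : dist x y ∈ Icc 0 (dist x y) := ⟨dist_nonneg, le_rfl⟩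
  constructor
  · have h1 := hb1 x (γ t)
    have h2 : dist x (γ t) = t := by
      rw [← geo_start hγ, geo_dist hγ h0 ht, abs_sub_comm, abs_of_nonneg (by linarith [ht.1])]
      ring
    rw [h2] at h1; linarith
  · have h1 := hb1 y (γ t)
    have h2 : dist y (γ t) = dist x y - t := by
      have h3 := geo_dist hγ hd ht
      rw [geo_end hγ] at h3
      rw [h3, abs_of_nonneg (by linarith [ht.2])]
    rw [h2] at h1; linarith

private lemma b_geo_le {b : X → ℝ} (hb1 : ∀ x y : X, b x ≤ b y + dist x y)
    {γ : ℝ → X} {x y : X} (hγ : IsGeodesicSegWrt (distFun X) γ x y)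
    {t : ℝ} (ht : t ∈ Icc 0 (dist x y)) :
    b (γ t) ≤ b x + t := by
  have h0 : (0:ℝ) ∈ Icc 0 (dist x y) := ⟨le_rfl, dist_nonneg⟩
  have h1 := hb1 (γ t) x
  have h2 : dist (γ t) x = t := by
    have h3 := geo_dist hγ ht h0
    rw [geo_start hγ] at h3
    rw [h3, sub_zero, abs_of_nonneg ht.1]
  rw [h2] at h1; linarith

/-- Upper bound: `conf(x,y) ≤ d(x,y) e^{-ε B}`. -/
private lemma conf_le_mul {b : X → ℝ} {ε : ℝ} (hε : 0 < ε)
    (hb1 : ∀ x y : X, b x ≤ b y + dist x y)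
    {x y : X} {γ : ℝ → X} (hγ : IsGeodesicSegWrt (distFun X) γ x y) :
    confDistWrt (distFun X) (uniformizationDensity b ε) x y ≤
      dist x y * Real.exp (-ε * Bq b x y) := by
  refine le_trans (conf_le_geo hγ) ?_
  have hpt : ∀ t ∈ Icc 0 (dist x y),
      uniformizationDensity b ε (γ t) ≤ Real.exp (-ε * Bq b x y) := by
    intro t ht
    have h := b_geo_ge hb1 hγ ht
    have hB : Bq b x y ≤ b (γ t) := by
      simp only [Bq]; linarith [h.1, h.2]
    have : -ε * b (γ t) ≤ -ε * Bq b x y := by nlinarith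
    exact Real.exp_le_exp.mpr this
  calc (∫ t in (0:ℝ)..(dist x y), uniformizationDensity b ε (γ t))
      ≤ ∫ _t in (0:ℝ)..(dist x y), Real.exp (-ε * Bq b x y) :=
        intervalIntegral.integral_mono_on dist_nonneg
          (integrable_dens hb1 dist_nonneg (geo_cont hγ))
          (intervalIntegrable_const) hpt
    _ = dist x y * Real.exp (-ε * Bq b x y) := by
        rw [intervalIntegral.integral_const, smul_eq_mul, sub_zero]

/-- Upper bound: `conf(x,y) ≤ (2/ε) e^{-ε B}`. -/
private lemma conf_le_two {b : X → ℝ} {ε : ℝ} (hε : 0 < ε)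
    (hb1 : ∀ x y : X, b x ≤ b y + dist x y)
    {x y : X} {γ : ℝ → X} (hγ : IsGeodesicSegWrt (distFun X) γ x y) :
    confDistWrt (distFun X) (uniformizationDensity b ε) x y ≤
      2 / ε * Real.exp (-ε * Bq b x y) := by
  set d := dist x y with hd
  set c := Bq b x y with hc
  set t₁ := (b x - b y + d) / 2 with ht₁
  have habs : |b x - b y| ≤ d := bLip hb1 x y
  rw [abs_le] at habs
  have ht₁0 : 0 ≤ t₁ := by simp only [ht₁]; linarith [habs.1]
  have ht₁d : t₁ ≤ d := by simp only [ht₁]; linarith [habs.2]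
  have hI₁ : IntervalIntegrable (fun t => uniformizationDensity b ε (γ t))
      MeasureTheory.volume 0 t₁ :=
    integrable_dens hb1 ht₁0 ((geo_cont hγ).mono (Icc_subset_Icc le_rfl ht₁d))
  have hI₂ : IntervalIntegrable (fun t => uniformizationDensity b ε (γ t))
      MeasureTheory.volume t₁ d :=
    integrable_dens hb1 ht₁d ((geo_cont hγ).mono (Icc_subset_Icc ht₁0 le_rfl))
  have hsplit : (∫ t in (0:ℝ)..d, uniformizationDensity b ε (γ t)) =
      (∫ t in (0:ℝ)..t₁, uniformizationDensity b ε (γ t)) +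
      (∫ t in t₁..d, uniformizationDensity b ε (γ t)) :=
    (intervalIntegral.integral_add_adjacent_intervals hI₁ hI₂).symm
  have hP₁ : (∫ t in (0:ℝ)..t₁, uniformizationDensity b ε (γ t)) ≤
      Real.exp (-ε * c) / ε := by
    have hpt : ∀ t ∈ Icc 0 t₁,
        uniformizationDensity b ε (γ t) ≤ Real.exp (-ε * (c + (t₁ - t))) := by
      intro t ht
      have htd : t ∈ Icc 0 d := ⟨ht.1, le_trans ht.2 ht₁d⟩
      have h := (b_geo_ge hb1 hγ htd).1
      apply Real.exp_le_exp.mpr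
      have harg : c + (t₁ - t) = b x - t := by simp only [hc, ht₁, Bq]; ring
      rw [harg]
      nlinarith
    have hmono := intervalIntegral.integral_mono_on ht₁0 hI₁
      (Continuous.intervalIntegrable (by continuity) _ _) hpt
    have hcomp : (∫ t in (0:ℝ)..t₁, Real.exp (-ε * (c + (t₁ - t)))) =
        (Real.exp (-ε * c) - Real.exp (-ε * (c + t₁))) / ε := by
      rw [intervalIntegral.integral_comp_sub_left
        (fun u => Real.exp (-ε * (c + u))) t₁, sub_self, sub_zero, intExp ε c t₁ hε]
    rw [hcomp] at hmono
    refine le_trans hmono ?_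
    have h := (Real.exp_pos (-ε * (c + t₁))).le
    gcongr
    linarith
  have hP₂ : (∫ t in t₁..d, uniformizationDensity b ε (γ t)) ≤
      Real.exp (-ε * c) / ε := by
    have hpt : ∀ t ∈ Icc t₁ d,
        uniformizationDensity b ε (γ t) ≤ Real.exp (-ε * (c + (t - t₁))) := by
      intro t ht
      have htd : t ∈ Icc 0 d := ⟨le_trans ht₁0 ht.1, ht.2⟩
      have h := (b_geo_ge hb1 hγ htd).2
      apply Real.exp_le_exp.mpr
      have harg : c + (t - t₁) = b y - (d - t) := by simp only [hc, ht₁, Bq]; ring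
      rw [harg]
      nlinarith
    have hmono := intervalIntegral.integral_mono_on ht₁d hI₂
      (Continuous.intervalIntegrable (by continuity) _ _) hpt
    have hcomp : (∫ t in t₁..d, Real.exp (-ε * (c + (t - t₁)))) =
        (Real.exp (-ε * c) - Real.exp (-ε * (c + (d - t₁)))) / ε := by
      rw [intervalIntegral.integral_comp_sub_right
        (fun u => Real.exp (-ε * (c + u))) t₁, sub_self, intExp ε c (d - t₁) hε]
    rw [hcomp] at hmono
    refine le_trans hmono ?_
    have h := (Real.exp_pos (-ε * (c + (d - t₁)))).le
    gcongr
    linarith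
  calc confDistWrt (distFun X) (uniformizationDensity b ε) x y
      ≤ ∫ t in (0:ℝ)..d, uniformizationDensity b ε (γ t) := conf_le_geo hγ
    _ = (∫ t in (0:ℝ)..t₁, uniformizationDensity b ε (γ t)) +
        (∫ t in t₁..d, uniformizationDensity b ε (γ t)) := hsplit
    _ ≤ Real.exp (-ε * c) / ε + Real.exp (-ε * c) / ε := add_le_add hP₁ hP₂
    _ = 2 / ε * Real.exp (-ε * c) := by ring

/-- Lower bound from any curve: `conf(x,y) ≥ (1 - e^{-ε d}) e^{-ε b(x)} / ε`. -/
private lemma conf_lower_endpoint {b : X → ℝ} {ε : ℝ} (hε : 0 < ε)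
    (hb1 : ∀ x y : X, b x ≤ b y + dist x y) (hgs : GeodesicSpaceWrt (distFun X)) (x y : X) :
    (1 - Real.exp (-ε * dist x y)) * Real.exp (-ε * b x) / ε ≤
      confDistWrt (distFun X) (uniformizationDensity b ε) x y := by
  rw [conf_eq]
  apply le_csInf (CS_nonempty hgs x y)
  rintro l ⟨T, γ, hT, hlip, h0, hT', rfl⟩
  have hdT : dist x y ≤ T := by
    have h := hlip 0 ⟨le_rfl, hT⟩ T ⟨hT, le_rfl⟩
    simp only [distFun] at h
    rw [h0, hT'] at h
    calc dist x y ≤ |0 - T| := h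
      _ = T := by rw [abs_sub_comm, sub_zero, abs_of_nonneg hT]
  have hpt : ∀ t ∈ Icc 0 T, Real.exp (-ε * (b x + t)) ≤ uniformizationDensity b ε (γ t) := by
    intro t ht
    apply Real.exp_le_exp.mpr
    have h1 := hb1 (γ t) x
    have h2 : dist (γ t) x ≤ t := by
      have h3 := hlip t ht 0 ⟨le_rfl, hT⟩
      simp only [distFun] at h3
      rw [h0] at h3
      calc dist (γ t) x ≤ |t - 0| := h3
        _ = t := by rw [sub_zero, abs_of_nonneg ht.1]
    nlinarith
  have key := intervalIntegral.integral_mono_on hT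
    (Continuous.intervalIntegrable (by continuity) _ _)
    (integrable_dens hb1 hT (lip_continuousOn hlip)) hpt
  rw [intExp ε (b x) T hε] at key
  refine le_trans ?_ key
  gcongr
  have hexp : Real.exp (-ε * (b x + T)) = Real.exp (-ε * b x) * Real.exp (-ε * T) := by
    rw [← Real.exp_add]; ring_nf
  have hTd : Real.exp (-ε * T) ≤ Real.exp (-ε * dist x y) :=
    Real.exp_le_exp.mpr (by nlinarith)
  nlinarith [Real.exp_pos (-ε * b x), Real.exp_pos (-ε * T)]

private lemma conf_lower_min {b : X → ℝ} {ε : ℝ} (hε : 0 < ε)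
    (hb1 : ∀ x y : X, b x ≤ b y + dist x y) (hgs : GeodesicSpaceWrt (distFun X)) (x y : X) :
    min 1 (ε * dist x y) * Real.exp (-ε * b x) / (2 * ε) ≤
      confDistWrt (distFun X) (uniformizationDensity b ε) x y := by
  refine le_trans ?_ (conf_lower_endpoint hε hb1 hgs x y)
  have h1 : min 1 (ε * dist x y) / 2 ≤ 1 - Real.exp (-(ε * dist x y)) :=
    one_sub_exp (by positivity)
  have h2 : -ε * dist x y = -(ε * dist x y) := by ring
  rw [h2]
  have h3 := (Real.exp_pos (-ε * b x)).le
  calc min 1 (ε * dist x y) * Real.exp (-ε * b x) / (2 * ε)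
      = (min 1 (ε * dist x y) / 2) * Real.exp (-ε * b x) / ε := by ring
    _ ≤ (1 - Real.exp (-(ε * dist x y))) * Real.exp (-ε * b x) / ε := by gcongr
    _ ≤ _ := le_rfl

private lemma conf_pos {b : X → ℝ} {ε : ℝ} (hε : 0 < ε)
    (hb1 : ∀ x y : X, b x ≤ b y + dist x y) (hgs : GeodesicSpaceWrt (distFun X))
    {x y : X} (hxy : x ≠ y) :
    0 < confDistWrt (distFun X) (uniformizationDensity b ε) x y := by
  refine lt_of_lt_of_le ?_ (conf_lower_min hε hb1 hgs x y)
  have hd : 0 < dist x y := dist_pos.mpr hxy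
  have : 0 < min 1 (ε * dist x y) := lt_min one_pos (by positivity)
  positivity

private lemma min_twice {u : ℝ} : min 1 u ≤ 2 * min 1 (u / 2) := by
  rcases le_total (u / 2) 1 with h | h
  · rw [min_eq_right h]
    calc min 1 u ≤ u := min_le_right 1 u
      _ = 2 * (u / 2) := by ring
  · rw [min_eq_left h]
    calc min 1 u ≤ 1 := min_le_left 1 u
      _ ≤ 2 * 1 := by norm_num

/-- Lower bound via the Gehring-Hayman property:
`conf(x,y) ≥ min(1, εd) e^{-ε(B + 2δ)} / (4Mε)`. -/
private lemma conf_lower_geo {b : X → ℝ} {ε M δ' : ℝ} (hε : 0 < ε) (hδ : 0 ≤ δ')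
    (hM : 1 ≤ M) (hb1 : ∀ x y : X, b x ≤ b y + dist x y)
    (hgh : IsGHDensityWrt (distFun X) M (uniformizationDensity b ε))
    {x y : X} {γ : ℝ → X} (hγ : IsGeodesicSegWrt (distFun X) γ x y)
    (hlow : ∃ t ∈ Icc 0 (dist x y), b (γ t) ≤ Bq b x y + 2 * δ') :
    min 1 (ε * dist x y) * Real.exp (-ε * (Bq b x y + 2 * δ')) / (4 * M * ε) ≤
      confDistWrt (distFun X) (uniformizationDensity b ε) x y := by
  set d := dist x y with hd
  have hd0 : 0 ≤ d := dist_nonneg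
  have hGH := hgh x y γ hγ
  simp only [distFun] at hGH
  -- the minimum of b along the geodesic
  obtain ⟨t₀, ht₀, hmin⟩ := isCompact_Icc.exists_isMinOn (α := ℝ) (β := ℝ)
    (Set.nonempty_Icc.mpr hd0) ((bCont hb1).comp_continuousOn (geo_cont hγ))
  set c := b (γ t₀) with hc
  have hcB : c ≤ Bq b x y + 2 * δ' := by
    obtain ⟨t, ht, hbt⟩ := hlow
    exact le_trans (hmin ht) hbt
  have hpt : ∀ t ∈ Icc 0 d, b (γ t) ≤ c + |t - t₀| := by
    intro t ht
    have h1 := hb1 (γ t) (γ t₀)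
    have h2 : dist (γ t) (γ t₀) = |t - t₀| := geo_dist hγ ht ht₀
    rw [h2] at h1; exact h1
  have hI₁ : IntervalIntegrable (fun t => uniformizationDensity b ε (γ t))
      MeasureTheory.volume 0 t₀ :=
    integrable_dens hb1 ht₀.1 ((geo_cont hγ).mono (Icc_subset_Icc le_rfl ht₀.2))
  have hI₂ : IntervalIntegrable (fun t => uniformizationDensity b ε (γ t))
      MeasureTheory.volume t₀ d :=
    integrable_dens hb1 ht₀.2 ((geo_cont hγ).mono (Icc_subset_Icc ht₀.1 le_rfl))
  have hP₁ : (Real.exp (-ε * c) - Real.exp (-ε * (c + t₀))) / ε ≤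
      ∫ t in (0:ℝ)..t₀, uniformizationDensity b ε (γ t) := by
    have hpt₁ : ∀ t ∈ Icc 0 t₀,
        Real.exp (-ε * (c + (t₀ - t))) ≤ uniformizationDensity b ε (γ t) := by
      intro t ht
      apply Real.exp_le_exp.mpr
      have h := hpt t ⟨ht.1, le_trans ht.2 ht₀.2⟩
      have habs : |t - t₀| = t₀ - t := by
        rw [abs_sub_comm, abs_of_nonneg (by linarith [ht.2])]
      rw [habs] at h
      nlinarith
    have hmono := intervalIntegral.integral_mono_on ht₀.1
      (Continuous.intervalIntegrable (by continuity) _ _) hI₁ hpt₁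
    have hcomp : (∫ t in (0:ℝ)..t₀, Real.exp (-ε * (c + (t₀ - t)))) =
        (Real.exp (-ε * c) - Real.exp (-ε * (c + t₀))) / ε := by
      rw [intervalIntegral.integral_comp_sub_left
        (fun u => Real.exp (-ε * (c + u))) t₀, sub_self, sub_zero, intExp ε c t₀ hε]
    rw [hcomp] at hmono
    exact hmono
  have hP₂ : (Real.exp (-ε * c) - Real.exp (-ε * (c + (d - t₀)))) / ε ≤
      ∫ t in t₀..d, uniformizationDensity b ε (γ t) := by
    have hpt₂ : ∀ t ∈ Icc t₀ d,
        Real.exp (-ε * (c + (t - t₀))) ≤ uniformizationDensity b ε (γ t) := by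
      intro t ht
      apply Real.exp_le_exp.mpr
      have h := hpt t ⟨le_trans ht₀.1 ht.1, ht.2⟩
      have habs : |t - t₀| = t - t₀ := abs_of_nonneg (by linarith [ht.1])
      rw [habs] at h
      nlinarith
    have hmono := intervalIntegral.integral_mono_on ht₀.2
      (Continuous.intervalIntegrable (by continuity) _ _) hI₂ hpt₂
    have hcomp : (∫ t in t₀..d, Real.exp (-ε * (c + (t - t₀)))) =
        (Real.exp (-ε * c) - Real.exp (-ε * (c + (d - t₀)))) / ε := by
      rw [intervalIntegral.integral_comp_sub_right
        (fun u => Real.exp (-ε * (c + u))) t₀, sub_self, intExp ε c (d - t₀) hε]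
    rw [hcomp] at hmono
    exact hmono
  have hsplit : (∫ t in (0:ℝ)..d, uniformizationDensity b ε (γ t)) =
      (∫ t in (0:ℝ)..t₀, uniformizationDensity b ε (γ t)) +
      (∫ t in t₀..d, uniformizationDensity b ε (γ t)) :=
    (intervalIntegral.integral_add_adjacent_intervals hI₁ hI₂).symm
  -- the key numeric bound
  have hnum : Real.exp (-ε * c) * (min 1 (ε * d) / 4) / ε ≤
      (Real.exp (-ε * c) - Real.exp (-ε * (c + t₀))) / ε +
      (Real.exp (-ε * c) - Real.exp (-ε * (c + (d - t₀)))) / ε := by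
    have he1 : Real.exp (-ε * (c + t₀)) = Real.exp (-ε * c) * Real.exp (-(ε * t₀)) := by
      rw [← Real.exp_add]; ring_nf
    have he2 : Real.exp (-ε * (c + (d - t₀))) =
        Real.exp (-ε * c) * Real.exp (-(ε * (d - t₀))) := by
      rw [← Real.exp_add]; ring_nf
    rw [he1, he2]
    have hkey : min 1 (ε * d) / 4 ≤
        (1 - Real.exp (-(ε * t₀))) + (1 - Real.exp (-(ε * (d - t₀)))) := by
      have hhalf : min 1 (ε * d) / 4 = (min 1 (ε * d) / 2) / 2 := by ring
      rcases le_total (d / 2) t₀ with hcase | hcase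
      · have h1 : min 1 (ε * (d / 2)) / 2 ≤ 1 - Real.exp (-(ε * (d / 2))) :=
          one_sub_exp (by positivity)
        have h2 : Real.exp (-(ε * t₀)) ≤ Real.exp (-(ε * (d / 2))) :=
          Real.exp_le_exp.mpr (by nlinarith)
        have h3 : Real.exp (-(ε * (d - t₀))) ≤ 1 := by
          rw [Real.exp_le_one_iff]
          nlinarith [ht₀.2]
        have h4 : min 1 (ε * d) ≤ 2 * min 1 (ε * d / 2) := min_twice
        have h5 : ε * (d / 2) = ε * d / 2 := by ring
        rw [h5] at h1 h2
        linarith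
      · have h1 : min 1 (ε * (d / 2)) / 2 ≤ 1 - Real.exp (-(ε * (d / 2))) :=
          one_sub_exp (by positivity)
        have h2 : Real.exp (-(ε * (d - t₀))) ≤ Real.exp (-(ε * (d / 2))) :=
          Real.exp_le_exp.mpr (by nlinarith)
        have h3 : Real.exp (-(ε * t₀)) ≤ 1 := by
          rw [Real.exp_le_one_iff]
          nlinarith [ht₀.1]
        have h4 : min 1 (ε * d) ≤ 2 * min 1 (ε * d / 2) := min_twice
        have h5 : ε * (d / 2) = ε * d / 2 := by ring
        rw [h5] at h1 h2
        linarith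
    have hec := (Real.exp_pos (-ε * c)).le
    rw [← add_div, div_le_div_iff_of_pos_right hε]
    calc Real.exp (-ε * c) * (min 1 (ε * d) / 4)
        ≤ Real.exp (-ε * c) *
            ((1 - Real.exp (-(ε * t₀))) + (1 - Real.exp (-(ε * (d - t₀))))) :=
          mul_le_mul_of_nonneg_left hkey hec
      _ = (Real.exp (-ε * c) - Real.exp (-ε * c) * Real.exp (-(ε * t₀))) +
          (Real.exp (-ε * c) - Real.exp (-ε * c) * Real.exp (-(ε * (d - t₀)))) := by ring
  -- assemble
  have hint : Real.exp (-ε * c) * (min 1 (ε * d) / 4) / ε ≤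
      ∫ t in (0:ℝ)..d, uniformizationDensity b ε (γ t) := by
    rw [hsplit]
    exact le_trans hnum (add_le_add hP₁ hP₂)
  have hM0 : (0:ℝ) < M := by linarith
  have hconf : Real.exp (-ε * c) * (min 1 (ε * d) / 4) / ε / M ≤
      confDistWrt (distFun X) (uniformizationDensity b ε) x y := by
    rw [div_le_iff₀ hM0, mul_comm _ M]
    exact le_trans hint hGH
  refine le_trans ?_ hconf
  have hee : Real.exp (-ε * (Bq b x y + 2 * δ')) ≤ Real.exp (-ε * c) :=
    Real.exp_le_exp.mpr (by nlinarith [hcB])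
  have hmin0 : 0 ≤ min 1 (ε * d) := le_min zero_le_one (by positivity)
  calc min 1 (ε * d) * Real.exp (-ε * (Bq b x y + 2 * δ')) / (4 * M * ε)
      ≤ min 1 (ε * d) * Real.exp (-ε * c) / (4 * M * ε) := by gcongr
    _ = Real.exp (-ε * c) * (min 1 (ε * d) / 4) / ε / M := by ring

end Aux3
section Aux4
set_option linter.unusedSectionVars false
set_option maxHeartbeats 1000000

variable {X : Type*} [MetricSpace X]

/-- Thin-triangle low point on a geodesic: some point of `[x,y]` is within
`(x|y)_z + 2δ` of `z`. -/
private lemma lowpoint_dist {δ' : ℝ} (hgs : GeodesicSpaceWrt (distFun X))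
    (hhyp : DeltaHyperbolicWrt (distFun X) δ') (z x y : X) {γ : ℝ → X}
    (hγ : IsGeodesicSegWrt (distFun X) γ x y) :
    ∃ t ∈ Icc 0 (dist x y),
      dist z (γ t) ≤ (dist x z + dist y z - dist x y) / 2 + 2 * δ' := by
  obtain ⟨γ₂, hγ₂⟩ := hgs y z
  obtain ⟨γ₃, hγ₃⟩ := hgs z x
  obtain ⟨thin1, -, -⟩ := hhyp x y z γ γ₂ γ₃ hγ hγ₂ hγ₃
  set d := dist x y with hdd
  have htsval : (0:ℝ) ≤ 0 := le_rfl
  set ts := (dist x z + d - dist y z) / 2 with hts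
  have htri1 : dist y z ≤ d + dist x z := by
    have h := dist_triangle y x z
    rw [dist_comm y x] at h; linarith
  have htri2 : dist x z ≤ d + dist y z := dist_triangle x y z
  have hts0 : 0 ≤ ts := by rw [hts]; linarith
  have htsd : ts ≤ d := by rw [hts]; linarith
  refine ⟨ts, ⟨hts0, htsd⟩, ?_⟩
  have hmem : γ ts ∈ segImageWrt (distFun X) γ x y := ⟨ts, ⟨hts0, htsd⟩, rfl⟩
  obtain ⟨q, hq, hpq⟩ := thin1 (γ ts) hmem
  have hpq' : dist (γ ts) q ≤ δ' := hpq
  rcases hq with h | h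
  · obtain ⟨w, hw, rfl⟩ := h
    simp only [distFun] at hw
    have e1 : dist y (γ₂ w) = w := by
      have h1 := geo_dist hγ₂ ⟨le_rfl, dist_nonneg⟩ hw
      rw [geo_start hγ₂] at h1
      rw [h1, zero_sub, abs_neg, abs_of_nonneg hw.1]
    have e2 : dist z (γ₂ w) = dist y z - w := by
      have h1 := geo_dist hγ₂ hw ⟨dist_nonneg, le_rfl⟩
      rw [geo_end hγ₂] at h1
      rw [dist_comm z (γ₂ w), h1, abs_of_nonpos (by linarith [hw.2]), neg_sub]
    have e3 : dist y (γ ts) = d - ts := by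
      have h1 := geo_dist hγ ⟨dist_nonneg, le_rfl⟩ ⟨hts0, htsd⟩
      rw [geo_end hγ] at h1
      rw [h1, abs_of_nonneg (by linarith [htsd, hdd.le, hdd.ge]), hdd]
    have triag1 := dist_triangle z (γ₂ w) (γ ts)
    have triag2 := dist_triangle y (γ₂ w) (γ ts)
    have hcomm : dist (γ₂ w) (γ ts) = dist (γ ts) (γ₂ w) := dist_comm _ _
    rw [hts]
    linarith
  · obtain ⟨w, hw, rfl⟩ := h
    simp only [distFun] at hw
    have f1 : dist z (γ₃ w) = w := by
      have h1 := geo_dist hγ₃ ⟨le_rfl, dist_nonneg⟩ hw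
      rw [geo_start hγ₃] at h1
      rw [h1, zero_sub, abs_neg, abs_of_nonneg hw.1]
    have f2 : dist x (γ₃ w) = dist z x - w := by
      have h1 := geo_dist hγ₃ hw ⟨dist_nonneg, le_rfl⟩
      rw [geo_end hγ₃] at h1
      rw [dist_comm x (γ₃ w), h1, abs_of_nonpos (by linarith [hw.2]), neg_sub]
    have f3 : dist x (γ ts) = ts := by
      have h1 := geo_dist hγ ⟨le_rfl, dist_nonneg⟩ ⟨hts0, htsd⟩
      rw [geo_start hγ] at h1
      rw [h1, zero_sub, abs_neg, abs_of_nonneg hts0]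
    have triag1 := dist_triangle z (γ₃ w) (γ ts)
    have triag2 := dist_triangle x (γ₃ w) (γ ts)
    have hcomm : dist (γ₃ w) (γ ts) = dist (γ ts) (γ₃ w) := dist_comm _ _
    have hcomm2 : dist z x = dist x z := dist_comm _ _
    rw [hts]
    linarith

/-! Busemann function basics. -/

private lemma ray_dist {ρ : ℝ → X} (hρ : IsGeodesicRayWrt (distFun X) ρ)
    {s t : ℝ} (hs : 0 ≤ s) (ht : 0 ≤ t) : dist (ρ s) (ρ t) = |s - t| :=
  hρ s hs t ht

private lemma bus_bddBelow {ρ : ℝ → X} (hρ : IsGeodesicRayWrt (distFun X) ρ) (w : X) :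
    BddBelow ((fun t => distFun X (ρ t) w - t) '' Ici 0) := by
  refine ⟨-dist (ρ 0) w, ?_⟩
  rintro r ⟨t, ht, rfl⟩
  simp only [distFun, mem_Ici] at *
  have h1 : dist (ρ 0) (ρ t) = t := by
    rw [ray_dist hρ le_rfl ht, zero_sub, abs_neg, abs_of_nonneg ht]
  have h2 := dist_triangle (ρ 0) (ρ t) w
  have h3 := dist_triangle (ρ 0) w (ρ t)
  have h4 : dist w (ρ t) = dist (ρ t) w := dist_comm _ _
  linarith

private lemma bus_nonempty {ρ : ℝ → X} (w : X) :
    ((fun t => distFun X (ρ t) w - t) '' Ici 0).Nonempty :=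
  ⟨_, ⟨0, self_mem_Ici, rfl⟩⟩

private lemma bus_le {ρ : ℝ → X} (hρ : IsGeodesicRayWrt (distFun X) ρ) (w : X)
    {t : ℝ} (ht : 0 ≤ t) :
    busemannWrt (distFun X) ρ w ≤ dist (ρ t) w - t :=
  csInf_le (bus_bddBelow hρ w) ⟨t, mem_Ici.mpr ht, rfl⟩

private lemma bus_lip {ρ : ℝ → X} (hρ : IsGeodesicRayWrt (distFun X) ρ) :
    ∀ x y : X, busemannWrt (distFun X) ρ x ≤ busemannWrt (distFun X) ρ y + dist x y := by
  intro x y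
  have key : busemannWrt (distFun X) ρ x - dist x y ≤ busemannWrt (distFun X) ρ y := by
    apply le_csInf (bus_nonempty y)
    rintro r ⟨t, ht, rfl⟩
    simp only [mem_Ici] at ht
    have h1 := bus_le hρ x ht
    have h2 := dist_triangle (ρ t) y x
    have h3 : dist y x = dist x y := dist_comm _ _
    simp only [distFun]
    linarith
  linarith

private lemma bus_antitone {ρ : ℝ → X} (hρ : IsGeodesicRayWrt (distFun X) ρ) (w : X)
    {s t : ℝ} (hs : 0 ≤ s) (hst : s ≤ t) :
    dist (ρ t) w - t ≤ dist (ρ s) w - s := by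
  have h1 : dist (ρ t) (ρ s) = t - s := by
    rw [ray_dist hρ (le_trans hs hst) hs, abs_of_nonneg (by linarith)]
  have h2 := dist_triangle (ρ t) (ρ s) w
  linarith

/-- The Busemann function equals the infimum over any tail. -/
private lemma bus_tail {ρ : ℝ → X} (hρ : IsGeodesicRayWrt (distFun X) ρ) (w : X)
    {S : ℝ} (hS : 0 ≤ S) :
    busemannWrt (distFun X) ρ w = sInf ((fun t => distFun X (ρ t) w - t) '' Ici S) := by
  have hsub : (fun t => distFun X (ρ t) w - t) '' Ici S ⊆
      (fun t => distFun X (ρ t) w - t) '' Ici 0 := by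
    apply image_mono
    exact Ici_subset_Ici.mpr hS
  apply le_antisymm
  · exact csInf_le_csInf (bus_bddBelow hρ w) ⟨_, ⟨S, self_mem_Ici, rfl⟩⟩ hsub
  · apply le_csInf (bus_nonempty w)
    rintro r ⟨t, ht, rfl⟩
    simp only [mem_Ici] at ht
    rcases le_total S t with h | h
    · exact csInf_le (BddBelow.mono hsub (bus_bddBelow hρ w)) ⟨t, mem_Ici.mpr h, rfl⟩
    · calc sInf ((fun t => distFun X (ρ t) w - t) '' Ici S)
          ≤ dist (ρ S) w - S := csInf_le (BddBelow.mono hsub (bus_bddBelow hρ w)) ⟨S, self_mem_Ici, rfl⟩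
        _ ≤ (fun t => distFun X (ρ t) w - t) t := bus_antitone hρ w ht h

/-- The Busemann function as a limit along integers. -/
private lemma bus_limit {ρ : ℝ → X} (hρ : IsGeodesicRayWrt (distFun X) ρ) (w : X) :
    Tendsto (fun n : ℕ => dist (ρ n) w - n) atTop (𝓝 (busemannWrt (distFun X) ρ w)) := by
  have hanti : Antitone (fun n : ℕ => dist (ρ n) w - n) := by
    intro m n hmn
    exact bus_antitone hρ w (Nat.cast_nonneg m) (by exact_mod_cast hmn)
  have hbdd : BddBelow (range (fun n : ℕ => dist (ρ n) w - n)) := by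
    obtain ⟨B, hB⟩ := bus_bddBelow hρ w
    refine ⟨B, ?_⟩
    rintro r ⟨n, rfl⟩
    exact hB ⟨n, mem_Ici.mpr (Nat.cast_nonneg n), rfl⟩
  have hlim := tendsto_atTop_ciInf hanti hbdd
  have heq : ⨅ n : ℕ, (dist (ρ n) w - n) = busemannWrt (distFun X) ρ w := by
    apply le_antisymm
    · apply le_csInf (bus_nonempty w)
      rintro r ⟨t, ht, rfl⟩
      simp only [mem_Ici] at ht
      calc ⨅ n : ℕ, (dist (ρ n) w - (n:ℝ)) ≤ dist (ρ ⌈t⌉₊) w - ⌈t⌉₊ :=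
            ciInf_le hbdd ⌈t⌉₊
        _ ≤ (fun t => distFun X (ρ t) w - t) t := bus_antitone hρ w ht (Nat.le_ceil t)
    · apply le_ciInf
      intro n
      exact bus_le hρ w (Nat.cast_nonneg n)
  rwa [heq] at hlim

/-- Low point for Busemann functions. -/
private lemma lowpoint_bus {δ' : ℝ} (hgs : GeodesicSpaceWrt (distFun X))
    (hhyp : DeltaHyperbolicWrt (distFun X) δ') {ρ : ℝ → X}
    (hρ : IsGeodesicRayWrt (distFun X) ρ) {x y : X} {γ : ℝ → X}
    (hγ : IsGeodesicSegWrt (distFun X) γ x y) :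
    ∃ t ∈ Icc 0 (dist x y), busemannWrt (distFun X) ρ (γ t) ≤
      (busemannWrt (distFun X) ρ x + busemannWrt (distFun X) ρ y - dist x y) / 2 + 2 * δ' := by
  have H : ∀ n : ℕ, ∃ t ∈ Icc 0 (dist x y),
      dist (ρ n) (γ t) ≤ (dist x (ρ n) + dist y (ρ n) - dist x y) / 2 + 2 * δ' :=
    fun n => lowpoint_dist hgs hhyp (ρ n) x y hγ
  choose tf htmem hbnd using H
  obtain ⟨tbar, htbar, φ, hφ, hconv⟩ := isCompact_Icc.tendsto_subseq htmem
  refine ⟨tbar, htbar, ?_⟩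
  -- LHS limit
  have hcont : ContinuousOn (fun t => busemannWrt (distFun X) ρ (γ t)) (Icc 0 (dist x y)) :=
    (bCont (bus_lip hρ)).comp_continuousOn (geo_cont hγ)
  have hL : Tendsto (fun n => busemannWrt (distFun X) ρ (γ (tf (φ n)))) atTop
      (𝓝 (busemannWrt (distFun X) ρ (γ tbar))) := by
    have h1 : Tendsto (tf ∘ φ) atTop (𝓝[Icc 0 (dist x y)] tbar) :=
      tendsto_nhdsWithin_of_tendsto_nhds_of_eventually_within _ hconv
        (Eventually.of_forall (fun n => htmem (φ n)))
    exact ((hcont tbar htbar).tendsto.comp h1)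
  -- RHS limit
  have hR : Tendsto (fun n : ℕ =>
      ((dist (ρ n) x - n) + (dist (ρ n) y - n) - dist x y) / 2 + 2 * δ') atTop
      (𝓝 ((busemannWrt (distFun X) ρ x + busemannWrt (distFun X) ρ y - dist x y) / 2
        + 2 * δ')) := by
    have h1 := (bus_limit hρ x).add (bus_limit hρ y)
    have h2 := ((h1.sub_const (dist x y)).div_const 2).add_const (2 * δ')
    exact h2
  have hRcomp := hR.comp hφ.tendsto_atTop
  -- comparison along the subsequence
  have hcmp : ∀ n, busemannWrt (distFun X) ρ (γ (tf (φ n))) ≤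
      ((dist (ρ (φ n)) x - (φ n)) + (dist (ρ (φ n)) y - (φ n)) - dist x y) / 2 + 2 * δ' := by
    intro n
    have h1 := bus_le hρ (γ (tf (φ n))) (Nat.cast_nonneg (φ n))
    have h2 := hbnd (φ n)
    have h3 : dist x (ρ (φ n)) = dist (ρ (φ n)) x := dist_comm _ _
    have h4 : dist y (ρ (φ n)) = dist (ρ (φ n)) y := dist_comm _ _
    rw [h3, h4] at h2
    calc busemannWrt (distFun X) ρ (γ (tf (φ n))) ≤ dist (ρ (φ n)) (γ (tf (φ n))) - (φ n) := h1
      _ ≤ _ := by linarith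
  exact le_of_tendsto_of_tendsto' hL hRcomp hcmp

/-- Growth of the Busemann function along a geodesic line asymptotic to `ρ`. -/
private lemma bus_growth {δ' : ℝ} (hδ' : 0 ≤ δ') (hgs : GeodesicSpaceWrt (distFun X))
    (hhyp : DeltaHyperbolicWrt (distFun X) δ') {ρ γL : ℝ → X}
    (hρ : IsGeodesicRayWrt (distFun X) ρ) (hline : IsGeodesicLineWrt (distFun X) γL)
    (hequiv : RayEquivWrt (distFun X) (fun t => γL (-t)) ρ) (t u : ℝ) (hu : 0 ≤ u) :
    busemannWrt (distFun X) ρ (γL t) + u - 2 * δ' ≤ busemannWrt (distFun X) ρ (γL (t + u)) := by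
  obtain ⟨c₀, hc₀⟩ := hequiv
  have hc₀0 : (0:ℝ) ≤ c₀ := le_trans dist_nonneg (hc₀ 0 self_mem_Ici)
  have hline' : ∀ a b : ℝ, dist (γL a) (γL b) = |a - b| := fun a b => hline a b
  set S₀ : ℝ := max 0 (|t| + |u| + δ' + c₀ + 1) with hS₀
  have hS₀0 : 0 ≤ S₀ := le_max_left _ _
  have hS₀big : |t| + |u| + δ' + c₀ + 1 ≤ S₀ := le_max_right _ _
  have key : ∀ s : ℝ, S₀ ≤ s → busemannWrt (distFun X) ρ (γL t) + u - 2 * δ' ≤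
      dist (ρ s) (γL (t + u)) - s := by
    intro s hs
    have hs0 : 0 ≤ s := le_trans hS₀0 hs
    have hsbig : |t| + |u| + δ' + c₀ + 1 ≤ s := le_trans hS₀big hs
    obtain ⟨htl, htr⟩ : -|t| ≤ t ∧ t ≤ |t| := ⟨neg_abs_le t, le_abs_self t⟩
    have hul : u ≤ |u| := le_abs_self u
    -- the geodesic from γL(-s) to γL(t+u)
    have hAB : distFun X (γL (-s)) (γL (t + u)) = t + u + s := by
      show dist (γL (-s)) (γL (t + u)) = t + u + s
      rw [hline' (-s) (t + u), abs_sub_comm, abs_of_nonneg (by linarith)]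
      ring
    have h₁ : IsGeodesicSegWrt (distFun X) (fun w => γL (w - s)) (γL (-s)) (γL (t + u)) := by
      refine ⟨by norm_num, ?_, ?_⟩
      · rw [hAB]
        show γL (t + u + s - s) = γL (t + u)
        congr 1
        ring
      · intro a _ b _
        show dist (γL (a - s)) (γL (b - s)) = |a - b|
        rw [hline' (a - s) (b - s)]
        congr 1
        ring
    obtain ⟨γ₂, hγ₂⟩ := hgs (γL (t + u)) (ρ s)
    obtain ⟨γ₃, hγ₃⟩ := hgs (ρ s) (γL (-s))
    obtain ⟨thin1, -, -⟩ := hhyp (γL (-s)) (γL (t + u)) (ρ s) _ γ₂ γ₃ h₁ hγ₂ hγ₃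
    have hpmem : γL t ∈ segImageWrt (distFun X) (fun w => γL (w - s)) (γL (-s)) (γL (t + u)) := by
      refine ⟨t + s, ?_, by show γL (t + s - s) = γL t; congr 1; ring⟩
      rw [hAB]
      constructor
      · linarith
      · linarith
    obtain ⟨q, hq, hpq⟩ := thin1 (γL t) hpmem
    have hpq' : dist (γL t) q ≤ δ' := hpq
    rcases hq with h | h
    · -- q on [γL(t+u), ρ s]
      obtain ⟨w, hw, rfl⟩ := h
      simp only [distFun] at hw
      have e1 : dist (γL (t + u)) (γ₂ w) = w := by
        have h1 := geo_dist hγ₂ ⟨le_rfl, dist_nonneg⟩ hw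
        rw [geo_start hγ₂] at h1
        rw [h1, zero_sub, abs_neg, abs_of_nonneg hw.1]
      have e2 : dist (ρ s) (γ₂ w) = dist (γL (t + u)) (ρ s) - w := by
        have h1 := geo_dist hγ₂ hw ⟨dist_nonneg, le_rfl⟩
        rw [geo_end hγ₂] at h1
        rw [dist_comm (ρ s) (γ₂ w), h1, abs_of_nonpos (by linarith [hw.2]), neg_sub]
      have e3 : dist (γL (t + u)) (γL t) = u := by
        rw [hline' (t + u) t]
        rw [show t + u - t = u by ring, abs_of_nonneg hu]
      have hwlow : u - δ' ≤ w := by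
        have h1 := dist_triangle (γL (t + u)) (γ₂ w) (γL t)
        have h2 : dist (γ₂ w) (γL t) = dist (γL t) (γ₂ w) := dist_comm _ _
        linarith
      have hlow2 : dist (ρ s) (γL t) - δ' ≤ dist (γL (t + u)) (ρ s) - w := by
        have h1 := dist_triangle (ρ s) (γ₂ w) (γL t)
        have h2 : dist (γ₂ w) (γL t) = dist (γL t) (γ₂ w) := dist_comm _ _
        linarith
      have hbus := bus_le hρ (γL t) hs0
      have hfinal : dist (γL (t + u)) (ρ s) = dist (ρ s) (γL (t + u)) := dist_comm _ _
      have hd₂ : u - δ' + (dist (ρ s) (γL t) - δ') ≤ dist (ρ s) (γL (t + u)) := by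
        rw [← hfinal]
        have := e2
        linarith [dist_nonneg (x := ρ s) (y := γ₂ w)]
      linarith
    · -- q on [ρ s, γL (-s)]: impossible for large s
      exfalso
      obtain ⟨w, hw, rfl⟩ := h
      simp only [distFun] at hw
      have f2 : dist (γ₃ w) (γL (-s)) ≤ dist (ρ s) (γL (-s)) := by
        have h1 := geo_dist hγ₃ hw ⟨dist_nonneg, le_rfl⟩
        rw [geo_end hγ₃] at h1
        rw [h1, abs_of_nonpos (by linarith [hw.2]), neg_sub]
        linarith [hw.1]
      have f3 : dist (ρ s) (γL (-s)) ≤ c₀ := by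
        have := hc₀ s hs0
        simp only [distFun] at this
        rw [dist_comm]
        exact this
      have f4 : dist (γL t) (γL (-s)) = t + s := by
        rw [hline' t (-s), abs_of_nonneg (by linarith)]
        ring
      have h1 := dist_triangle (γL t) (γ₃ w) (γL (-s))
      linarith
  -- conclude via the tail characterization
  have htail := bus_tail hρ (γL (t + u)) hS₀0
  rw [htail]
  apply le_csInf
  · exact ⟨_, ⟨S₀, self_mem_Ici, rfl⟩⟩
  · rintro r ⟨s, hs, rfl⟩
    simp only [mem_Ici] at hs
    exact key s hs

end Aux4
section Aux5
set_option linter.unusedSectionVars false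
set_option maxHeartbeats 1000000

variable {X : Type*} [MetricSpace X]

/-- The combined properties of `b` that we use. -/
private def GoodB (δ' K : ℝ) (b : X → ℝ) : Prop :=
  (∀ x y : X, b x ≤ b y + dist x y) ∧
  (∀ x y : X, ∀ γ : ℝ → X, IsGeodesicSegWrt (distFun X) γ x y →
     ∃ t ∈ Icc 0 (dist x y), b (γ t) ≤ Bq b x y + 2 * δ') ∧
  (∀ x : X, ∃ η : ℝ → X, IsGeodesicRayWrt (distFun X) η ∧ dist x (η 0) ≤ K + 1 ∧
     ∀ u : ℝ, 0 ≤ u → b (η 0) + u - 2 * δ' ≤ b (η u))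

private lemma goodB_of_bhat {δ' K : ℝ} (hδ' : 0 ≤ δ') (hgs : GeodesicSpaceWrt (distFun X))
    (hhyp : DeltaHyperbolicWrt (distFun X) δ') {b : X → ℝ}
    (hb : BhatStarlike (distFun X) K b) : GoodB δ' K b := by
  rcases hb with ⟨z, s₀, hbz, hstar⟩ | ⟨ρ, s₀, hρ, hbρ, hstar⟩
  · -- point branch : b = dist · z + s₀
    refine ⟨?_, ?_, ?_⟩
    · intro x y
      rw [hbz x, hbz y]
      have := dist_triangle x y z
      have h2 : distFun X x z = dist x z := rfl
      simp only [distFun]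
      linarith
    · intro x y γ hγ
      obtain ⟨t, ht, hbnd⟩ := lowpoint_dist hgs hhyp z x y hγ
      refine ⟨t, ht, ?_⟩
      rw [hbz (γ t)]
      have hBq : Bq b x y = (dist x z + dist y z - dist x y) / 2 + s₀ := by
        simp only [Bq, hbz x, hbz y, distFun]
        ring
      rw [hBq]
      simp only [distFun]
      have hcomm : dist (γ t) z = dist z (γ t) := dist_comm _ _
      linarith
    · intro x
      obtain ⟨γ, hγray, hγ0, hinf⟩ := hstar x
      have hne : ((distFun X x) '' (γ '' Ici 0)).Nonempty :=
        ⟨_, ⟨γ 0, ⟨0, self_mem_Ici, rfl⟩, rfl⟩⟩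
      have hlt : sInf ((distFun X x) '' (γ '' Ici 0)) < K + 1 :=
        lt_of_le_of_lt hinf (by linarith)
      obtain ⟨r, ⟨p, ⟨t₀, ht₀, rfl⟩, rfl⟩, hr⟩ := exists_lt_of_csInf_lt hne hlt
      simp only [mem_Ici] at ht₀
      refine ⟨fun u => γ (t₀ + u), ?_, ?_, ?_⟩
      · intro s hs t ht
        simp only [mem_Ici] at hs ht
        have h := hγray (t₀ + s) (by simp only [mem_Ici]; linarith)
          (t₀ + t) (by simp only [mem_Ici]; linarith)
        calc distFun X (γ (t₀ + s)) (γ (t₀ + t)) = |t₀ + s - (t₀ + t)| := h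
          _ = |s - t| := by congr 1; ring
      · show dist x (γ (t₀ + 0)) ≤ K + 1
        rw [show t₀ + 0 = t₀ by ring]
        exact le_of_lt hr
      · intro u hu
        have hval : ∀ v : ℝ, 0 ≤ v → b (γ (t₀ + v)) = t₀ + v + s₀ := by
          intro v hv
          rw [hbz (γ (t₀ + v))]
          have h := hγray (t₀ + v) (by simp only [mem_Ici]; linarith) 0 self_mem_Ici
          have h2 : distFun X (γ (t₀ + v)) (γ 0) = dist (γ (t₀ + v)) (γ 0) := rfl
          rw [h2] at h
          rw [hγ0] at h
          simp only [distFun]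
          rw [h, sub_zero, abs_of_nonneg (by linarith)]
        show b (γ (t₀ + 0)) + u - 2 * δ' ≤ b (γ (t₀ + u))
        rw [hval 0 le_rfl, hval u hu]
        linarith
  · -- Busemann branch : b = busemann ρ + s₀
    refine ⟨?_, ?_, ?_⟩
    · intro x y
      rw [hbρ x, hbρ y]
      linarith [bus_lip hρ x y]
    · intro x y γ hγ
      obtain ⟨t, ht, hbnd⟩ := lowpoint_bus hgs hhyp hρ hγ
      refine ⟨t, ht, ?_⟩
      rw [hbρ (γ t)]
      have hBq : Bq b x y =
          (busemannWrt (distFun X) ρ x + busemannWrt (distFun X) ρ y - dist x y) / 2 + s₀ := by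
        simp only [Bq, hbρ x, hbρ y]
        ring
      rw [hBq]
      linarith
    · intro x
      obtain ⟨γL, hline, hequiv, hinf⟩ := hstar x
      have hne : ((distFun X x) '' (range γL)).Nonempty :=
        ⟨_, ⟨γL 0, ⟨0, rfl⟩, rfl⟩⟩
      have hlt : sInf ((distFun X x) '' (range γL)) < K + 1 :=
        lt_of_le_of_lt hinf (by linarith)
      obtain ⟨r, ⟨p, ⟨t₀, rfl⟩, rfl⟩, hr⟩ := exists_lt_of_csInf_lt hne hlt
      refine ⟨fun u => γL (t₀ + u), ?_, ?_, ?_⟩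
      · intro s _ t _
        calc distFun X (γL (t₀ + s)) (γL (t₀ + t)) = |t₀ + s - (t₀ + t)| :=
              hline (t₀ + s) (t₀ + t)
          _ = |s - t| := by congr 1; ring
      · show dist x (γL (t₀ + 0)) ≤ K + 1
        rw [show t₀ + 0 = t₀ by ring]
        exact le_of_lt hr
      · intro u hu
        show b (γL (t₀ + 0)) + u - 2 * δ' ≤ b (γL (t₀ + u))
        rw [hbρ (γL (t₀ + u)), hbρ (γL (t₀ + 0))]
        rw [show t₀ + 0 = t₀ by ring]
        have := bus_growth hδ' hgs hhyp hρ hline hequiv t₀ u hu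
        linarith

end Aux5
section Aux6
set_option linter.unusedSectionVars false
set_option maxHeartbeats 1000000

variable {X : Type*} [MetricSpace X]

private def BDset (b : X → ℝ) (ε : ℝ) (x : X) : Set ℝ :=
  { r : ℝ | ∃ u : ℕ → X,
      CauchyWrt (confDistWrt (distFun X) (uniformizationDensity b ε)) u ∧
      ¬ ConvWrt (confDistWrt (distFun X) (uniformizationDensity b ε)) u ∧
      Tendsto (fun n => confDistWrt (distFun X) (uniformizationDensity b ε) x (u n))
        atTop (𝓝 r) }

private lemma bdry_eq (b : X → ℝ) (ε : ℝ) (x : X) :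
    bdryDistWrt (confDistWrt (distFun X) (uniformizationDensity b ε)) x =
      sInf (BDset b ε x) := rfl

private lemma BDset_nonneg {b : X → ℝ} {ε : ℝ} {x : X} : ∀ r ∈ BDset b ε x, (0:ℝ) ≤ r := by
  rintro r ⟨u, -, -, hT⟩
  exact ge_of_tendsto hT (Eventually.of_forall fun n => conf_nonneg b ε x (u n))

private lemma ray_seg {η : ℝ → X} (hη : IsGeodesicRayWrt (distFun X) η) {m n : ℝ}
    (hm : 0 ≤ m) (hmn : m ≤ n) :
    IsGeodesicSegWrt (distFun X) (fun w => η (m + w)) (η m) (η n) := by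
  have hd : distFun X (η m) (η n) = n - m := by
    show dist (η m) (η n) = n - m
    have h := hη m (mem_Ici.mpr hm) n (mem_Ici.mpr (le_trans hm hmn))
    have h2 : dist (η m) (η n) = |m - n| := h
    rw [h2, abs_of_nonpos (by linarith), neg_sub]
  refine ⟨by show η (m + 0) = η m; congr 1; ring, ?_, ?_⟩
  · rw [hd]
    show η (m + (n - m)) = η n
    congr 1
    ring
  · intro a ha b hb
    rw [hd] at ha hb
    show dist (η (m + a)) (η (m + b)) = |a - b|
    have h := hη (m + a) (mem_Ici.mpr (by linarith [ha.1])) (m + b)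
      (mem_Ici.mpr (by linarith [hb.1]))
    have h2 : dist (η (m + a)) (η (m + b)) = |m + a - (m + b)| := h
    rw [h2]
    congr 1
    ring

private lemma ray_tail_bound {b : X → ℝ} {ε δ' : ℝ} (hε : 0 < ε)
    (hb1 : ∀ x y : X, b x ≤ b y + dist x y)
    {η : ℝ → X} (hη : IsGeodesicRayWrt (distFun X) η)
    (hgrow : ∀ u : ℝ, 0 ≤ u → b (η 0) + u - 2 * δ' ≤ b (η u))
    {m n : ℝ} (hm : 0 ≤ m) (hmn : m ≤ n) :
    confDistWrt (distFun X) (uniformizationDensity b ε) (η m) (η n) ≤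
      Real.exp (-ε * (b (η 0) + m - 2 * δ')) / ε := by
  set c := b (η 0) + m - 2 * δ' with hc
  have hseg := ray_seg hη hm hmn
  have hdd : dist (η m) (η n) = n - m := by
    have h2 : dist (η m) (η n) = |m - n| := hη m (mem_Ici.mpr hm) n
      (mem_Ici.mpr (le_trans hm hmn))
    rw [h2, abs_of_nonpos (by linarith), neg_sub]
  have hpt : ∀ t ∈ Icc 0 (dist (η m) (η n)),
      uniformizationDensity b ε (η (m + t)) ≤ Real.exp (-ε * (c + t)) := by
    intro t ht
    apply Real.exp_le_exp.mpr
    have h := hgrow (m + t) (by linarith [ht.1])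
    have : c + t ≤ b (η (m + t)) := by rw [hc]; linarith
    nlinarith
  have hint := intervalIntegral.integral_mono_on dist_nonneg
    (integrable_dens hb1 dist_nonneg (geo_cont hseg))
    (Continuous.intervalIntegrable (by continuity) _ _) hpt
  calc confDistWrt (distFun X) (uniformizationDensity b ε) (η m) (η n)
      ≤ ∫ t in (0:ℝ)..(dist (η m) (η n)), uniformizationDensity b ε (η (m + t)) :=
        conf_le_geo hseg
    _ ≤ ∫ t in (0:ℝ)..(dist (η m) (η n)), Real.exp (-ε * (c + t)) := hint
    _ = (Real.exp (-ε * c) - Real.exp (-ε * (c + dist (η m) (η n)))) / ε :=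
        intExp ε c _ hε
    _ ≤ Real.exp (-ε * c) / ε := by
        have h := (Real.exp_pos (-ε * (c + dist (η m) (η n)))).le
        gcongr
        linarith

private lemma conf_diff_le {b : X → ℝ} {ε : ℝ}
    (hb1 : ∀ x y : X, b x ≤ b y + dist x y) (hgs : GeodesicSpaceWrt (distFun X))
    (x p q : X) :
    |confDistWrt (distFun X) (uniformizationDensity b ε) x p -
      confDistWrt (distFun X) (uniformizationDensity b ε) x q| ≤
      confDistWrt (distFun X) (uniformizationDensity b ε) p q := by
  rw [abs_sub_le_iff]
  constructor
  · have h := conf_triangle (ε := ε) hb1 hgs x q p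
    rw [conf_symm b ε q p] at h
    linarith
  · have h := conf_triangle (ε := ε) hb1 hgs x p q
    linarith

/-- Construction of a boundary point along the escape ray from `GoodB`. -/
private lemma bdry_upper {b : X → ℝ} {ε δ' K : ℝ} (hε : 0 < ε)
    (hδ' : 0 ≤ δ') (hK : 0 ≤ K) (hgs : GeodesicSpaceWrt (distFun X))
    (hgb : GoodB δ' K b) (x : X) :
    ∃ r ∈ BDset b ε x,
      r ≤ ((K + 1) * Real.exp (ε * (K + 1)) + Real.exp (ε * (2 * δ' + (K + 1))) / ε) *
        Real.exp (-ε * b x) := by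
  obtain ⟨hb1, -, hb3⟩ := hgb
  obtain ⟨η, hη, hdx, hgrow⟩ := hb3 x
  have hK1 : (0:ℝ) < K + 1 := by linarith
  have hbη0 : b x - (K + 1) ≤ b (η 0) := by
    have := hb1 x (η 0)
    linarith
  have htail : ∀ m n : ℝ, 0 ≤ m → m ≤ n →
      confDistWrt (distFun X) (uniformizationDensity b ε) (η m) (η n) ≤
        Real.exp (-ε * (b (η 0) + m - 2 * δ')) / ε :=
    fun m n hm hmn => ray_tail_bound hε hb1 hη hgrow hm hmn
  -- the exponential bound tends to zero
  have hlim : Tendsto (fun k : ℕ =>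
      Real.exp (-ε * (b (η 0) + k - 2 * δ')) / ε) atTop (𝓝 0) := by
    have h0 : Tendsto (fun k : ℕ =>
        Real.exp (-ε * (b (η 0) + k - 2 * δ')) / ε) atTop (𝓝 (0 / ε)) := by
      apply Filter.Tendsto.div_const
      have h1 : Tendsto (fun k : ℕ => -ε * (b (η 0) + k - 2 * δ')) atTop atBot := by
        have h2 : Tendsto (fun k : ℕ => (k:ℝ)) atTop atTop := tendsto_natCast_atTop_atTop
        have h3 : Tendsto (fun k : ℕ => b (η 0) + (k:ℝ) - 2 * δ') atTop atTop :=
          tendsto_atTop_add_const_right _ (-(2 * δ'))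
            (tendsto_atTop_add_const_left _ (b (η 0)) h2) |>.congr (by intro k; ring)
        exact (tendsto_const_mul_atBot_of_neg (by linarith : -ε < 0)).mpr h3
      exact Real.tendsto_exp_atBot.comp h1
    rwa [zero_div] at h0
  -- Cauchy
  have hcau : CauchyWrt (confDistWrt (distFun X) (uniformizationDensity b ε))
      (fun k : ℕ => η k) := by
    intro θ hθ
    obtain ⟨N, hN⟩ := (Filter.eventually_atTop).mp (hlim.eventually (gt_mem_nhds hθ))
    refine ⟨N, fun k hk l hl => ?_⟩
    rcases le_total k l with h | h
    · calc confDistWrt (distFun X) (uniformizationDensity b ε) (η k) (η l)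
          ≤ Real.exp (-ε * (b (η 0) + k - 2 * δ')) / ε :=
            htail k l (Nat.cast_nonneg k) (by exact_mod_cast h)
        _ < θ := hN k hk
    · rw [conf_symm]
      calc confDistWrt (distFun X) (uniformizationDensity b ε) (η l) (η k)
          ≤ Real.exp (-ε * (b (η 0) + l - 2 * δ')) / ε :=
            htail l k (Nat.cast_nonneg l) (by exact_mod_cast h)
        _ < θ := hN l hl
  -- not convergent
  have hnotconv : ¬ ConvWrt (confDistWrt (distFun X) (uniformizationDensity b ε))
      (fun k : ℕ => η k) := by
    rintro ⟨y, hy⟩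
    set cb := min 1 ε * Real.exp (-ε * b y) / (2 * ε) with hcb
    have hcb0 : 0 < cb := by
      have h1 : 0 < min 1 ε := lt_min one_pos hε
      positivity
    obtain ⟨N₀, hN₀⟩ := exists_nat_ge (dist (η 0) y + 1)
    have hev2 : ∀ᶠ k : ℕ in atTop, cb ≤
        confDistWrt (distFun X) (uniformizationDensity b ε) (η k) y := by
      rw [Filter.eventually_atTop]
      refine ⟨N₀, fun k hk => ?_⟩
      have hdk : (1:ℝ) ≤ dist y (η k) := by
        have h1 : dist (η 0) (η k) = k := by
          have h2 : dist (η 0) (η k) = |0 - (k:ℝ)| :=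
            hη 0 self_mem_Ici k (mem_Ici.mpr (Nat.cast_nonneg k))
          rw [h2, zero_sub, abs_neg, abs_of_nonneg (Nat.cast_nonneg k)]
        have h3 := dist_triangle (η 0) y (η k)
        have h4 : (N₀ : ℝ) ≤ k := by exact_mod_cast hk
        linarith
      have hmin : min 1 ε ≤ min 1 (ε * dist y (η k)) := by
        apply le_min (min_le_left _ _)
        refine le_trans (min_le_right 1 ε) ?_
        nlinarith
      have hlow := conf_lower_min hε hb1 hgs y (η k)
      rw [conf_symm]
      refine le_trans ?_ hlow
      rw [hcb]
      gcongr
    obtain ⟨k, hk1, hk2⟩ := ((hy.eventually (gt_mem_nhds hcb0)).and hev2).exists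
    linarith
  -- the sequence of conformal distances converges
  have hCS : CauchySeq (fun k : ℕ =>
      confDistWrt (distFun X) (uniformizationDensity b ε) x (η k)) := by
    rw [Metric.cauchySeq_iff]
    intro θ hθ
    obtain ⟨N, hN⟩ := hcau θ hθ
    refine ⟨N, fun m hm n hn => ?_⟩
    rw [Real.dist_eq]
    exact lt_of_le_of_lt (conf_diff_le hb1 hgs x (η m) (η n)) (hN m hm n hn)
  obtain ⟨r, hr⟩ := cauchySeq_tendsto_of_complete hCS
  refine ⟨r, ⟨fun k => η k, hcau, hnotconv, hr⟩, ?_⟩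
  -- bound the limit
  obtain ⟨γ₀, hγ₀⟩ := hgs x (η 0)
  have hc1 : confDistWrt (distFun X) (uniformizationDensity b ε) x (η 0) ≤
      (K + 1) * Real.exp (ε * (K + 1)) * Real.exp (-ε * b x) := by
    have h1 := conf_le_mul hε hb1 hγ₀
    have h2 : b x - (K + 1) ≤ Bq b x (η 0) := by
      have h3 : b (η 0) - dist x (η 0) ≤ b x + (K+1) - dist x (η 0) := by linarith [hb1 (η 0) x, dist_comm x (η 0) ▸ hb1 (η 0) x]
      simp only [Bq]
      have h4 := hb1 x (η 0)
      linarith [hbη0, hdx]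
    have h3 : Real.exp (-ε * Bq b x (η 0)) ≤
        Real.exp (ε * (K + 1)) * Real.exp (-ε * b x) := by
      rw [← Real.exp_add]
      apply Real.exp_le_exp.mpr
      nlinarith
    calc confDistWrt (distFun X) (uniformizationDensity b ε) x (η 0)
        ≤ dist x (η 0) * Real.exp (-ε * Bq b x (η 0)) := h1
      _ ≤ (K + 1) * (Real.exp (ε * (K + 1)) * Real.exp (-ε * b x)) := by
          apply mul_le_mul hdx h3 (Real.exp_pos _).le (by linarith)
      _ = (K + 1) * Real.exp (ε * (K + 1)) * Real.exp (-ε * b x) := by ring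
  have hc2 : ∀ k : ℕ, confDistWrt (distFun X) (uniformizationDensity b ε) (η 0) (η k) ≤
      Real.exp (ε * (2 * δ' + (K + 1))) / ε * Real.exp (-ε * b x) := by
    intro k
    refine le_trans (htail 0 k le_rfl (Nat.cast_nonneg k)) ?_
    have harg : Real.exp (-ε * (b (η 0) + 0 - 2 * δ')) ≤
        Real.exp (ε * (2 * δ' + (K + 1))) * Real.exp (-ε * b x) := by
      rw [← Real.exp_add]
      apply Real.exp_le_exp.mpr
      nlinarith
    calc Real.exp (-ε * (b (η 0) + 0 - 2 * δ')) / ε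
        ≤ Real.exp (ε * (2 * δ' + (K + 1))) * Real.exp (-ε * b x) / ε := by gcongr
      _ = Real.exp (ε * (2 * δ' + (K + 1))) / ε * Real.exp (-ε * b x) := by ring
  have hbnd : ∀ k : ℕ, confDistWrt (distFun X) (uniformizationDensity b ε) x (η k) ≤
      ((K + 1) * Real.exp (ε * (K + 1)) + Real.exp (ε * (2 * δ' + (K + 1))) / ε) *
        Real.exp (-ε * b x) := by
    intro k
    calc confDistWrt (distFun X) (uniformizationDensity b ε) x (η k)
        ≤ confDistWrt (distFun X) (uniformizationDensity b ε) x (η 0) +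
          confDistWrt (distFun X) (uniformizationDensity b ε) (η 0) (η k) :=
          conf_triangle hb1 hgs x (η 0) (η k)
      _ ≤ (K + 1) * Real.exp (ε * (K + 1)) * Real.exp (-ε * b x) +
          Real.exp (ε * (2 * δ' + (K + 1))) / ε * Real.exp (-ε * b x) :=
          add_le_add hc1 (hc2 k)
      _ = _ := by ring
  exact le_of_tendsto hr (Eventually.of_forall hbnd)

end Aux6
section Aux7
set_option linter.unusedSectionVars false
set_option maxHeartbeats 1000000

variable {X : Type*} [MetricSpace X] [ProperSpace X]

/-- A conformal-Cauchy sequence that stays at bounded distance (frequently) converges. -/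
private lemma conv_of_notescape {b : X → ℝ} {ε : ℝ} (hε : 0 < ε)
    (hb1 : ∀ x y : X, b x ≤ b y + dist x y) (hgs : GeodesicSpaceWrt (distFun X))
    {u : ℕ → X}
    (hC : CauchyWrt (confDistWrt (distFun X) (uniformizationDensity b ε)) u)
    {x : X} {R : ℝ} (hR : ∃ᶠ n in atTop, dist x (u n) < R) :
    ConvWrt (confDistWrt (distFun X) (uniformizationDensity b ε)) u := by
  obtain ⟨φ, hφmono, hφ⟩ := Filter.extraction_of_frequently_atTop hR
  have hmem : ∀ n : ℕ, u (φ n) ∈ closedBall x (max R 0) := by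
    intro n
    rw [mem_closedBall, dist_comm]
    exact le_trans (hφ n).le (le_max_left _ _)
  obtain ⟨y, -, ψ, hψmono, hψ⟩ := (isCompact_closedBall x (max R 0)).tendsto_subseq hmem
  set v : ℕ → X := fun n => u (φ (ψ n)) with hv
  have hvy : Tendsto (fun n => dist (v n) y) atTop (𝓝 0) := by
    have := tendsto_iff_dist_tendsto_zero.mp hψ
    exact this
  set Db : ℝ := max R 0 + dist x y with hDb
  have hvyb : ∀ n, dist (v n) y ≤ Db := by
    intro n
    have h1 : dist (v n) x ≤ max R 0 := by
      have h0 := hmem (ψ n)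
      rwa [mem_closedBall] at h0
    calc dist (v n) y ≤ dist (v n) x + dist x y := dist_triangle _ _ _
      _ ≤ Db := by rw [hDb]; linarith
  have hcd0 : Tendsto (fun n =>
      confDistWrt (distFun X) (uniformizationDensity b ε) (v n) y) atTop (𝓝 0) := by
    have hub : ∀ n, confDistWrt (distFun X) (uniformizationDensity b ε) (v n) y ≤
        dist (v n) y * (Real.exp (ε * Db) * Real.exp (-ε * b y)) := by
      intro n
      obtain ⟨γ, hγ⟩ := hgs (v n) y
      refine le_trans (conf_le_mul hε hb1 hγ) ?_
      have h2 : b y - Db ≤ Bq b (v n) y := by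
        have h3 := hb1 y (v n)
        have h4 : dist y (v n) = dist (v n) y := dist_comm _ _
        simp only [Bq]
        have h5 := hvyb n
        linarith [dist_nonneg (x := v n) (y := y)]
      have h3 : Real.exp (-ε * Bq b (v n) y) ≤ Real.exp (ε * Db) * Real.exp (-ε * b y) := by
        rw [← Real.exp_add]
        apply Real.exp_le_exp.mpr
        nlinarith
      exact mul_le_mul_of_nonneg_left h3 dist_nonneg
    have hlim2 : Tendsto (fun n => dist (v n) y *
        (Real.exp (ε * Db) * Real.exp (-ε * b y))) atTop (𝓝 0) := by
      have := hvy.mul_const (Real.exp (ε * Db) * Real.exp (-ε * b y))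
      rwa [zero_mul] at this
    exact squeeze_zero (fun n => conf_nonneg b ε (v n) y) hub hlim2
  refine ⟨y, ?_⟩
  rw [Metric.tendsto_atTop]
  intro θ hθ
  obtain ⟨N₁, hN₁⟩ := hC (θ / 2) (by linarith)
  obtain ⟨K₂, hK₂⟩ := Filter.eventually_atTop.mp (hcd0.eventually (gt_mem_nhds (by linarith : (0:ℝ) < θ / 2)))
  set k := max K₂ N₁ with hk
  have hφψk : N₁ ≤ φ (ψ k) := le_trans (le_max_right K₂ N₁) ((hφmono.comp hψmono).le_apply)
  refine ⟨N₁, fun n hn => ?_⟩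
  have h1 := hN₁ n hn (φ (ψ k)) hφψk
  have h2 : confDistWrt (distFun X) (uniformizationDensity b ε) (v k) y < θ / 2 :=
    hK₂ k (le_max_left _ _)
  have h3 : confDistWrt (distFun X) (uniformizationDensity b ε) (u n) y ≤
      confDistWrt (distFun X) (uniformizationDensity b ε) (u n) (u (φ (ψ k))) +
      confDistWrt (distFun X) (uniformizationDensity b ε) (u (φ (ψ k))) y :=
    conf_triangle hb1 hgs _ _ _
  rw [Real.dist_eq, sub_zero, abs_of_nonneg (conf_nonneg b ε (u n) y)]
  calc confDistWrt (distFun X) (uniformizationDensity b ε) (u n) y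
      ≤ _ + _ := h3
    _ < θ / 2 + θ / 2 := add_lt_add h1 h2
    _ = θ := by ring

private lemma BDset_lower {b : X → ℝ} {ε : ℝ} (hε : 0 < ε)
    (hb1 : ∀ x y : X, b x ≤ b y + dist x y) (hgs : GeodesicSpaceWrt (distFun X))
    (x : X) : ∀ r ∈ BDset b ε x, Real.exp (-ε * b x) / (2 * ε) ≤ r := by
  rintro r ⟨u, hC, hNC, hT⟩
  have hesc : ∀ᶠ n in atTop, 1 / ε ≤ dist x (u n) := by
    by_contra h
    rw [Filter.not_eventually] at h
    exact hNC (conv_of_notescape hε hb1 hgs hC (h.mono fun n hn => not_le.mp hn))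
  have hev : ∀ᶠ n in atTop, Real.exp (-ε * b x) / (2 * ε) ≤
      confDistWrt (distFun X) (uniformizationDensity b ε) x (u n) := by
    refine hesc.mono fun n hn => ?_
    have hmin : min 1 (ε * dist x (u n)) = 1 := by
      apply min_eq_left
      have h2 : ε * (1/ε) = 1 := mul_one_div_cancel hε.ne'
      nlinarith [mul_le_mul_of_nonneg_left hn hε.le]
    have := conf_lower_min hε hb1 hgs x (u n)
    rw [hmin, one_mul] at this
    exact this
  exact ge_of_tendsto hT hev

/-- The two-sided bound on the boundary distance. -/
private lemma bd_bounds {b : X → ℝ} {ε δ' K : ℝ} (hε : 0 < ε) (hδ' : 0 ≤ δ')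
    (hK : 0 ≤ K) (hgs : GeodesicSpaceWrt (distFun X)) (hgb : GoodB δ' K b) (x : X) :
    Real.exp (-ε * b x) / (2 * ε) ≤
      bdryDistWrt (confDistWrt (distFun X) (uniformizationDensity b ε)) x ∧
    bdryDistWrt (confDistWrt (distFun X) (uniformizationDensity b ε)) x ≤
      ((K + 1) * Real.exp (ε * (K + 1)) + Real.exp (ε * (2 * δ' + (K + 1))) / ε) *
        Real.exp (-ε * b x) := by
  obtain ⟨r, hrmem, hrle⟩ := bdry_upper hε hδ' hK hgs hgb x
  constructor
  · rw [bdry_eq]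
    exact le_csInf ⟨r, hrmem⟩ (BDset_lower hε hgb.1 hgs x)
  · rw [bdry_eq]
    exact le_trans (csInf_le ⟨0, fun s hs => BDset_nonneg s hs⟩ hrmem) hrle

end Aux7
section Aux8
set_option maxHeartbeats 1000000

private def Lam (ε d : ℝ) : ℝ := max 0 (-Real.log (ε * d))

private lemma Lam_nonneg (ε d : ℝ) : 0 ≤ Lam ε d := le_max_left _ _

private lemma Lam_exp {ε d : ℝ} (hε : 0 < ε) (hd : 0 < d) :
    Real.exp (-Lam ε d) = min 1 (ε * d) := by
  rcases le_total (ε * d) 1 with h | h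
  · have h1 : 0 ≤ -Real.log (ε * d) := by
      rw [neg_nonneg]
      exact Real.log_nonpos (by positivity) h
    rw [Lam, max_eq_right h1, neg_neg, Real.exp_log (by positivity), min_eq_right h]
  · have h1 : -Real.log (ε * d) ≤ 0 := by
      rw [neg_nonpos]
      exact Real.log_nonneg h
    rw [Lam, max_eq_left h1, neg_zero, Real.exp_zero, min_eq_left h]

private lemma Lam_zero_of_ge {ε d : ℝ} (hε : 0 < ε) (hd : 1 / ε ≤ d) : Lam ε d = 0 := by
  apply max_eq_left
  rw [neg_nonpos]
  apply Real.log_nonneg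
  rw [div_le_iff₀ hε] at hd
  nlinarith

private lemma Lam_pos_lt {ε d : ℝ} (hε : 0 < ε) (h : 0 < Lam ε d) : d < 1 / ε := by
  by_contra hcon
  push_neg at hcon
  rw [Lam_zero_of_ge hε hcon] at h
  exact lt_irrefl 0 h

private lemma Lam_mono_eps {ε ε' d : ℝ} (hε' : 0 < ε') (hle : ε' ≤ ε) (hd : 0 < d) :
    Lam ε d ≤ Lam ε' d := by
  apply max_le (Lam_nonneg ε' d)
  refine le_trans ?_ (le_max_right _ _)
  rw [neg_le_neg_iff]
  exact Real.log_le_log (by positivity) (by nlinarith)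

private lemma Lam_shift {ε ε' d : ℝ} (hε : 0 < ε) (hε' : 0 < ε') (hle : ε' ≤ ε)
    (hd : 0 < d) : Lam ε' d ≤ Lam ε d + Real.log (ε / ε') := by
  have hlog : 0 ≤ Real.log (ε / ε') :=
    Real.log_nonneg ((one_le_div hε').mpr hle)
  apply max_le
  · have := Lam_nonneg ε d
    linarith
  · have key : -Real.log (ε' * d) = -Real.log (ε * d) + Real.log (ε / ε') := by
      rw [Real.log_mul hε'.ne' hd.ne', Real.log_mul hε.ne' hd.ne',
        Real.log_div hε.ne' hε'.ne']
      ring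
    rw [key]
    simp only [Lam]
    have := le_max_right (0:ℝ) (-Real.log (ε * d))
    linarith

end Aux8
section Aux9
set_option maxHeartbeats 1000000

private lemma lemR_core {e1 e2 A S S' L : ℝ} (he1 : 0 < e1) (he2 : 0 < e2)
    (hL : 0 ≤ L) (hS'S : S' ≤ S + 2 * L)
    (hP1 : -A ≤ 1 ∨ S ≤ 0) (hP2 : A ≤ 1 ∨ 0 ≤ S) :
    (e2 / e1) * A + S' ≤
      (1 + 2 * L + |e2 / e1 - e1 / e2| + |e2 / e1 - 1|) +
      max ((e2 / e1) * (A + S)) ((e1 / e2) * (A + S)) := by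
  set a := e2 / e1 with hadef
  set ai := e1 / e2 with haidef
  have ha0 : 0 < a := by rw [hadef]; positivity
  have hai0 : 0 < ai := by rw [haidef]; positivity
  have haai : a * ai = 1 := by rw [hadef, haidef]; field_simp
  have habs1 : 0 ≤ |a - ai| := abs_nonneg _
  have habs2 : 0 ≤ |a - 1| := abs_nonneg _
  rcases le_total a 1 with hA1 | hA1
  · -- a ≤ 1, ai ≥ 1
    have hai1 : 1 ≤ ai := by nlinarith
    rcases le_total (A + S) 0 with hG | hG
    · -- use the left branch of max
      refine le_trans ?_ (add_le_add le_rfl (le_max_left _ _))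
      -- a*A + S' ≤ cR + a*(A+S), i.e. (1-a)*S + (S'-S) ≤ cR
      have hS1 : (1 - a) * S ≤ 1 := by
        rcases hP1 with hcap | hS0
        · -- S ≤ -A ≤ 1
          have : S ≤ 1 := by nlinarith
          rcases le_or_gt S 0 with h | h
          · nlinarith
          · nlinarith
        · nlinarith
      nlinarith
    · -- use the right branch of max
      refine le_trans ?_ (add_le_add le_rfl (le_max_right _ _))
      have hQ : (a - ai) * A + (1 - ai) * S ≤ |a - ai| := by
        rcases le_or_gt S 0 with hS0 | hS0
        · have hAS : -S ≤ A := by linarith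
          have t1 : (a - ai) * A ≤ (a - ai) * (-S) := by nlinarith
          nlinarith
        · have t2 : (1 - ai) * S ≤ 0 := by nlinarith
          rcases le_or_gt A 0 with hA0 | hA0
          · rcases hP1 with hcap | hS0'
            · have t3 : (a - ai) * A ≤ (ai - a) * 1 := by nlinarith
              have t4 : ai - a ≤ |a - ai| := by
                rw [abs_sub_comm]
                exact le_abs_self _
              linarith
            · linarith
          · have t3 : (a - ai) * A ≤ 0 := by nlinarith
            linarith
      nlinarith
  · -- 1 ≤ a, ai ≤ 1
    have hai1 : ai ≤ 1 := by nlinarith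
    rcases le_total 0 (A + S) with hG | hG
    · refine le_trans ?_ (add_le_add le_rfl (le_max_left _ _))
      have hS1 : (1 - a) * S ≤ |a - 1| := by
        rcases le_or_gt 0 S with hS0 | hS0
        · nlinarith
        · rcases hP2 with hcap | hS0'
          · have hSA : -S ≤ A := by linarith
            have : -S ≤ 1 := by linarith
            have t1 : (1 - a) * S ≤ (a - 1) * 1 := by nlinarith
            have t4 : a - 1 ≤ |a - 1| := le_abs_self _
            linarith
          · linarith
      nlinarith
    · refine le_trans ?_ (add_le_add le_rfl (le_max_right _ _))
      have hQ : (a - ai) * A + (1 - ai) * S ≤ |a - ai| := by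
        rcases le_or_gt 0 S with hS0 | hS0
        · have hAS : A ≤ -S := by linarith
          have t1 : (a - ai) * A ≤ (a - ai) * (-S) := by nlinarith
          nlinarith
        · have t2 : (1 - ai) * S ≤ 0 := by nlinarith
          rcases le_or_gt A 0 with hA0 | hA0
          · have t3 : (a - ai) * A ≤ 0 := by nlinarith
            linarith
          · rcases hP2 with hcap | hS0'
            · have t3 : (a - ai) * A ≤ (a - ai) * 1 := by nlinarith
              have t4 : a - ai ≤ |a - ai| := le_abs_self _
              linarith
            · linarith
      nlinarith

/-- The four-point comparison lemma. -/
private lemma lemR {ε ε' : ℝ} (hε : 0 < ε) (hε' : 0 < ε')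
    {dp dq da db : ℝ} (hp : 0 < dp) (hq : 0 < dq) (ha0 : 0 < da) (hb0 : 0 < db)
    (h1 : dp + dq - da - db ≤ 2 * dp) (h2 : dp + dq - da - db ≤ 2 * dq)
    (h3 : -(2 * da) ≤ dp + dq - da - db) (h4 : -(2 * db) ≤ dp + dq - da - db) :
    ε' / 2 * (dp + dq - da - db) + (Lam ε' da + Lam ε' db - Lam ε' dp - Lam ε' dq) ≤
      (1 + 2 * |Real.log (ε' / ε)| + |ε' / ε - ε / ε'| + |ε' / ε - 1|) +
      max ((ε' / ε) * (ε / 2 * (dp + dq - da - db) +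
            (Lam ε da + Lam ε db - Lam ε dp - Lam ε dq)))
          ((ε / ε') * (ε / 2 * (dp + dq - da - db) +
            (Lam ε da + Lam ε db - Lam ε dp - Lam ε dq))) := by
  have hcap : ∀ d : ℝ, 0 < d → d ≤ 1 / ε → ε * d ≤ 1 := by
    intro d hd hle
    rw [le_div_iff₀ hε] at hle
    nlinarith
  set D := dp + dq - da - db with hD
  set A := ε / 2 * D with hAdef
  set S := Lam ε da + Lam ε db - Lam ε dp - Lam ε dq with hSdef
  set S' := Lam ε' da + Lam ε' db - Lam ε' dp - Lam ε' dq with hS'def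
  set L := |Real.log (ε' / ε)| with hLdef
  have hL0 : 0 ≤ L := abs_nonneg _
  -- P1
  have hP1 : -A ≤ 1 ∨ S ≤ 0 := by
    rcases le_or_gt da (1 / ε) with hda | hda
    · left
      have := hcap da ha0 hda
      rw [hAdef]
      nlinarith
    · rcases le_or_gt db (1 / ε) with hdb | hdb
      · left
        have := hcap db hb0 hdb
        rw [hAdef]
        nlinarith
      · right
        rw [hSdef, Lam_zero_of_ge hε hda.le, Lam_zero_of_ge hε hdb.le]
        linarith [Lam_nonneg ε dp, Lam_nonneg ε dq]
  -- P2
  have hP2 : A ≤ 1 ∨ 0 ≤ S := by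
    rcases le_or_gt dp (1 / ε) with hdp | hdp
    · left
      have := hcap dp hp hdp
      rw [hAdef]
      nlinarith
    · rcases le_or_gt dq (1 / ε) with hdq | hdq
      · left
        have := hcap dq hq hdq
        rw [hAdef]
        nlinarith
      · right
        rw [hSdef, Lam_zero_of_ge hε hdp.le, Lam_zero_of_ge hε hdq.le]
        linarith [Lam_nonneg ε da, Lam_nonneg ε db]
  -- S' vs S comparison
  have hS'S : S' ≤ S + 2 * L := by
    rcases le_total ε' ε with hord | hord
    · have hlog : Real.log (ε / ε') ≤ L := by
        have hinv : Real.log (ε' / ε) = -Real.log (ε / ε') := by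
          rw [Real.log_div hε'.ne' hε.ne', Real.log_div hε.ne' hε'.ne']
          ring
        rw [hLdef, hinv, abs_neg]
        exact le_abs_self _
      have k1 := Lam_mono_eps hε' hord hp
      have k2 := Lam_mono_eps hε' hord hq
      have k3 := Lam_shift hε hε' hord ha0
      have k4 := Lam_shift hε hε' hord hb0
      rw [hS'def, hSdef]
      have hlogpos : 0 ≤ Real.log (ε / ε') := Real.log_nonneg ((one_le_div hε').mpr hord)
      linarith
    · have hlog : Real.log (ε' / ε) ≤ L := le_abs_self _
      have k1 := Lam_mono_eps hε hord ha0
      have k2 := Lam_mono_eps hε hord hb0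
      have k3 := Lam_shift hε' hε hord hp
      have k4 := Lam_shift hε' hε hord hq
      rw [hS'def, hSdef]
      have hlogpos : 0 ≤ Real.log (ε' / ε) := Real.log_nonneg ((one_le_div hε).mpr hord)
      linarith
  have hcore := lemR_core hε hε' hL0 hS'S hP1 hP2
  have heq : (ε' / ε) * A = ε' / 2 * D := by
    rw [hAdef]
    field_simp
  linarith [hcore]
end Aux9
section Aux10
set_option linter.unusedSectionVars false
set_option maxHeartbeats 1000000

/-- The boundary-distance comparison constant. -/
private noncomputable def cSix (δ' K e : ℝ) : ℝ :=
  (K + 1) * Real.exp (e * (K + 1)) + Real.exp (e * (2 * δ' + (K + 1))) / e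

private lemma cSix_pos {δ' K e : ℝ} (hK : 0 ≤ K) (he : 0 < e) : 0 < cSix δ' K e := by
  have h1 : (0:ℝ) < K + 1 := by linarith
  have h2 := Real.exp_pos (e * (K + 1))
  have h3 := Real.exp_pos (e * (2 * δ' + (K + 1)))
  rw [cSix]
  positivity

/-- Parameter for the `∂`-Lipschitz radius. -/
private noncomputable def lamOne (δ' K e : ℝ) : ℝ :=
  min (1 / 2) (1 / (8 * e * cSix δ' K e))

private lemma lamOne_pos {δ' K e : ℝ} (hK : 0 ≤ K) (he : 0 < e) : 0 < lamOne δ' K e := by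
  have := cSix_pos (δ' := δ') hK he
  apply lt_min (by norm_num)
  positivity

/-- The `∂`-Lipschitz constant for one direction. -/
private noncomputable def LOne (δ' K M e e' : ℝ) : ℝ :=
  8 * M * e' * Real.exp (e' / (2 * e)) * cSix δ' K e * Real.exp (1 / 4 + 2 * e * δ')

private lemma LOne_pos {δ' K M e e' : ℝ} (hK : 0 ≤ K) (he : 0 < e) (he' : 0 < e')
    (hM : 1 ≤ M) : 0 < LOne δ' K M e e' := by
  have := cSix_pos (δ' := δ') hK he
  have h2 := Real.exp_pos (e' / (2 * e))
  have h3 := Real.exp_pos (1 / 4 + 2 * e * δ')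
  rw [LOne]
  have hM0 : (0:ℝ) < M := by linarith
  positivity

variable {X : Type*} [MetricSpace X] [ProperSpace X]

/-- From the `∂`-Lipschitz premise we get metric smallness. -/
private lemma premise_small {b : X → ℝ} {ε δ' K : ℝ} (hε : 0 < ε) (hδ' : 0 ≤ δ')
    (hK : 0 ≤ K) (hgs : GeodesicSpaceWrt (distFun X)) (hgb : GoodB δ' K b) {x y : X}
    (hy : confDistWrt (distFun X) (uniformizationDensity b ε) y x <
      lamOne δ' K ε * bdryDistWrt (confDistWrt (distFun X) (uniformizationDensity b ε)) x) :
    ε * dist x y ≤ 1 / 4 := by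
  have hc6 := cSix_pos (δ' := δ') hK hε
  have hbd := (bd_bounds hε hδ' hK hgs hgb x).2
  have hbd' : bdryDistWrt (confDistWrt (distFun X) (uniformizationDensity b ε)) x ≤
      cSix δ' K ε * Real.exp (-ε * b x) := by
    rw [cSix]; exact hbd
  have hlow := conf_lower_min hε hgb.1 hgs x y
  rw [← conf_symm] at hy
  have hlam : lamOne δ' K ε ≤ 1 / (8 * ε * cSix δ' K ε) := min_le_right _ _
  have hlam0 : 0 < lamOne δ' K ε := lamOne_pos hK hε
  have hE := Real.exp_pos (-ε * b x)
  -- min 1 (ε d) * E / (2ε) ≤ conf x y < lam * bd x ≤ lam * c6 * E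
  have hkey : min 1 (ε * dist x y) * Real.exp (-ε * b x) / (2 * ε) <
      (1 / (8 * ε * cSix δ' K ε)) * (cSix δ' K ε * Real.exp (-ε * b x)) := by
    have hbd0 : 0 ≤ bdryDistWrt (confDistWrt (distFun X) (uniformizationDensity b ε)) x := by
      nlinarith [conf_nonneg b ε x y]
    calc min 1 (ε * dist x y) * Real.exp (-ε * b x) / (2 * ε)
        ≤ confDistWrt (distFun X) (uniformizationDensity b ε) x y := hlow
      _ < lamOne δ' K ε *
          bdryDistWrt (confDistWrt (distFun X) (uniformizationDensity b ε)) x := hy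
      _ ≤ (1 / (8 * ε * cSix δ' K ε)) * (cSix δ' K ε * Real.exp (-ε * b x)) := by
          apply mul_le_mul hlam hbd' hbd0
          positivity
  have hmin : min 1 (ε * dist x y) < 1 / 4 := by
    have hsimp : (1 / (8 * ε * cSix δ' K ε)) * (cSix δ' K ε * Real.exp (-ε * b x)) =
        Real.exp (-ε * b x) / (8 * ε) := by
      field_simp
    rw [hsimp, div_lt_div_iff₀ (by positivity) (by positivity)] at hkey
    nlinarith [mul_pos hE (show (0:ℝ) < 8 * ε by positivity)]
  rcases le_total (ε * dist x y) 1 with h | h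
  · rw [min_eq_right h] at hmin
    linarith
  · rw [min_eq_left h] at hmin
    norm_num at hmin

end Aux10
section Aux10b
set_option linter.unusedSectionVars false
set_option maxHeartbeats 1600000

variable {X : Type*} [MetricSpace X] [ProperSpace X]

/-- One direction of the `∂`-Lipschitz property with explicit constants. -/
private lemma partialLip_one {b b' : X → ℝ} {ε ε' δ' K M : ℝ}
    (hε : 0 < ε) (hε' : 0 < ε') (hδ' : 0 ≤ δ') (hK : 0 ≤ K) (hM : 1 ≤ M)
    (hgs : GeodesicSpaceWrt (distFun X))
    (hgb : GoodB δ' K b) (hgb' : GoodB δ' K b')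
    (hgh : IsGHDensityWrt (distFun X) M (uniformizationDensity b ε))
    (x y z : X)
    (hy : confDistWrt (distFun X) (uniformizationDensity b ε) y x <
      lamOne δ' K ε * bdryDistWrt (confDistWrt (distFun X) (uniformizationDensity b ε)) x)
    (hz : confDistWrt (distFun X) (uniformizationDensity b ε) z x <
      lamOne δ' K ε * bdryDistWrt (confDistWrt (distFun X) (uniformizationDensity b ε)) x) :
    confDistWrt (distFun X) (uniformizationDensity b' ε') y z /
      bdryDistWrt (confDistWrt (distFun X) (uniformizationDensity b' ε')) x ≤
    LOne δ' K M ε ε' *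
      (confDistWrt (distFun X) (uniformizationDensity b ε) y z /
        bdryDistWrt (confDistWrt (distFun X) (uniformizationDensity b ε)) x) := by
  have hc6 := cSix_pos (δ' := δ') hK hε
  have hM0 : (0:ℝ) < M := by linarith
  have hLpos := LOne_pos (δ' := δ') (e := ε) (e' := ε') hK hε hε' hM
  have hbdx := bd_bounds hε hδ' hK hgs hgb x
  have hbd'x := bd_bounds hε' hδ' hK hgs hgb' x
  have hbdxpos : 0 < bdryDistWrt (confDistWrt (distFun X) (uniformizationDensity b ε)) x :=
    lt_of_lt_of_le (by positivity) hbdx.1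
  have hbd'xpos : 0 < bdryDistWrt (confDistWrt (distFun X) (uniformizationDensity b' ε')) x :=
    lt_of_lt_of_le (by positivity) hbd'x.1
  have hbdup : bdryDistWrt (confDistWrt (distFun X) (uniformizationDensity b ε)) x ≤
      cSix δ' K ε * Real.exp (-ε * b x) := by
    rw [cSix]; exact hbdx.2
  have hdy : ε * dist x y ≤ 1 / 4 := premise_small hε hδ' hK hgs hgb hy
  have hdz : ε * dist x z ≤ 1 / 4 := premise_small hε hδ' hK hgs hgb hz
  have h4y : dist x y ≤ 1 / (4 * ε) := by
    rw [le_div_iff₀ (by positivity)]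
    nlinarith
  have h4z : dist x z ≤ 1 / (4 * ε) := by
    rw [le_div_iff₀ (by positivity)]
    nlinarith
  have htri : dist y z ≤ dist x y + dist x z := by
    have h := dist_triangle y x z
    have hxy : dist y x = dist x y := dist_comm _ _
    linarith
  have hdyz : ε * dist y z ≤ 1 / 2 := by nlinarith
  have hhalf : (1:ℝ) / (4 * ε) + 1 / (4 * ε) = 1 / (2 * ε) := by
    field_simp
    ring
  by_cases hyz : y = z
  · subst hyz
    rw [conf_self, conf_self, zero_div, zero_div, mul_zero]
  · have hdyz0 : 0 < dist y z := dist_pos.mpr hyz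
    obtain ⟨γ, hγ⟩ := hgs y z
    -- upper bound for the target metric
    have hBq' : b' x - 1 / (2 * ε) ≤ Bq b' y z := by
      have h1 := hgb'.1 x y
      have h2 := hgb'.1 x z
      simp only [Bq]
      linarith
    have hup : confDistWrt (distFun X) (uniformizationDensity b' ε') y z ≤
        dist y z * (Real.exp (ε' / (2 * ε)) * Real.exp (-ε' * b' x)) := by
      refine le_trans (conf_le_mul hε' hgb'.1 hγ) ?_
      have hexp : Real.exp (-ε' * Bq b' y z) ≤
          Real.exp (ε' / (2 * ε)) * Real.exp (-ε' * b' x) := by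
        rw [← Real.exp_add]
        apply Real.exp_le_exp.mpr
        have hm := mul_le_mul_of_nonneg_left hBq' hε'.le
        have hdiveq : ε' * (1 / (2 * ε)) = ε' / (2 * ε) := by field_simp
        nlinarith
      exact mul_le_mul_of_nonneg_left hexp dist_nonneg
    -- lower bound for the source metric
    have hBq : Bq b y z ≤ b x + 1 / (4 * ε) := by
      have h1 := hgb.1 y x
      have h2 := hgb.1 z x
      have hxy : dist y x = dist x y := dist_comm _ _
      have hxz : dist z x = dist x z := dist_comm _ _
      simp only [Bq]
      nlinarith [dist_nonneg (x := y) (y := z)]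
    have hlow : dist y z * (Real.exp (-(1:ℝ)/4 - 2*ε*δ') * Real.exp (-ε * b x)) / (4 * M) ≤
        confDistWrt (distFun X) (uniformizationDensity b ε) y z := by
      have hlg := conf_lower_geo hε hδ' hM hgb.1 hgh hγ (hgb.2.1 y z γ hγ)
      rw [min_eq_right (by linarith : ε * dist y z ≤ 1)] at hlg
      have heq2 : ε * dist y z * Real.exp (-ε * (Bq b y z + 2 * δ')) / (4*M*ε) =
          dist y z * Real.exp (-ε * (Bq b y z + 2 * δ')) / (4*M) := by
        field_simp
      rw [heq2] at hlg
      refine le_trans ?_ hlg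
      have hexp : Real.exp (-(1:ℝ)/4 - 2*ε*δ') * Real.exp (-ε * b x) ≤
          Real.exp (-ε * (Bq b y z + 2 * δ')) := by
        rw [← Real.exp_add]
        apply Real.exp_le_exp.mpr
        have h8 : -ε * (b x + 1/(4*ε) + 2*δ') = -(1:ℝ)/4 - 2*ε*δ' + -ε * b x := by
          field_simp
          ring
        nlinarith [mul_le_mul_of_nonneg_left hBq hε.le]
      gcongr
    -- assemble
    have hLHS : confDistWrt (distFun X) (uniformizationDensity b' ε') y z /
        bdryDistWrt (confDistWrt (distFun X) (uniformizationDensity b' ε')) x ≤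
        2 * ε' * Real.exp (ε' / (2 * ε)) * dist y z := by
      have step1 : confDistWrt (distFun X) (uniformizationDensity b' ε') y z /
          bdryDistWrt (confDistWrt (distFun X) (uniformizationDensity b' ε')) x ≤
          (dist y z * (Real.exp (ε' / (2 * ε)) * Real.exp (-ε' * b' x))) /
          (Real.exp (-ε' * b' x) / (2 * ε')) :=
        div_le_div₀ (by positivity) hup (by positivity) hbd'x.1
      have step2 : (dist y z * (Real.exp (ε' / (2 * ε)) * Real.exp (-ε' * b' x))) /
          (Real.exp (-ε' * b' x) / (2 * ε')) =
          2 * ε' * Real.exp (ε' / (2 * ε)) * dist y z := by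
        rw [div_div_eq_mul_div]
        field_simp [Real.exp_ne_zero]
      rw [step2] at step1
      exact step1
    have hRHS : dist y z * Real.exp (-(1:ℝ)/4 - 2*ε*δ') / (4 * M * cSix δ' K ε) ≤
        confDistWrt (distFun X) (uniformizationDensity b ε) y z /
        bdryDistWrt (confDistWrt (distFun X) (uniformizationDensity b ε)) x := by
      have step1 : (dist y z * (Real.exp (-(1:ℝ)/4 - 2*ε*δ') * Real.exp (-ε * b x)) / (4 * M)) /
          (cSix δ' K ε * Real.exp (-ε * b x)) ≤
          confDistWrt (distFun X) (uniformizationDensity b ε) y z /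
          bdryDistWrt (confDistWrt (distFun X) (uniformizationDensity b ε)) x :=
        div_le_div₀ (conf_nonneg b ε y z) hlow hbdxpos hbdup
      have step2 : (dist y z * (Real.exp (-(1:ℝ)/4 - 2*ε*δ') * Real.exp (-ε * b x)) / (4 * M)) /
          (cSix δ' K ε * Real.exp (-ε * b x)) =
          dist y z * Real.exp (-(1:ℝ)/4 - 2*ε*δ') / (4 * M * cSix δ' K ε) := by
        field_simp [Real.exp_ne_zero]
      rw [step2] at step1
      exact step1
    have hident : LOne δ' K M ε ε' *
        (dist y z * Real.exp (-(1:ℝ)/4 - 2*ε*δ') / (4 * M * cSix δ' K ε)) =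
        2 * ε' * Real.exp (ε' / (2 * ε)) * dist y z := by
      have hneg : Real.exp (-(1:ℝ)/4 - 2*ε*δ') = (Real.exp (1/4 + 2*ε*δ'))⁻¹ := by
        rw [← Real.exp_neg]
        congr 1
        ring
      rw [LOne, hneg]
      field_simp [Real.exp_ne_zero]
      ring
    calc confDistWrt (distFun X) (uniformizationDensity b' ε') y z /
        bdryDistWrt (confDistWrt (distFun X) (uniformizationDensity b' ε')) x
        ≤ 2 * ε' * Real.exp (ε' / (2 * ε)) * dist y z := hLHS
      _ = LOne δ' K M ε ε' *
          (dist y z * Real.exp (-(1:ℝ)/4 - 2*ε*δ') / (4 * M * cSix δ' K ε)) := hident.symm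
      _ ≤ _ := mul_le_mul_of_nonneg_left hRHS hLpos.le

end Aux10b
section Aux11
set_option linter.unusedSectionVars false
set_option maxHeartbeats 1600000

variable {X : Type*} [MetricSpace X]

private lemma conf_le_combined {b : X → ℝ} {ε : ℝ} (hε : 0 < ε)
    (hb1 : ∀ x y : X, b x ≤ b y + dist x y)
    {x y : X} {γ : ℝ → X} (hγ : IsGeodesicSegWrt (distFun X) γ x y) :
    confDistWrt (distFun X) (uniformizationDensity b ε) x y ≤
      2 / ε * Real.exp (-ε * Bq b x y) * min 1 (ε * dist x y) := by
  rcases le_total (ε * dist x y) 1 with h | h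
  · rw [min_eq_right h]
    have h1 := conf_le_mul hε hb1 hγ
    have hE := (Real.exp_pos (-ε * Bq b x y)).le
    have key : 2 / ε * Real.exp (-ε * Bq b x y) * (ε * dist x y) =
        2 * dist x y * Real.exp (-ε * Bq b x y) := by
      field_simp
    rw [key]
    nlinarith [dist_nonneg (x := x) (y := y)]
  · rw [min_eq_left h, mul_one]
    exact conf_le_two hε hb1 hγ

private lemma conf_le_exp {b : X → ℝ} {ε : ℝ} (hε : 0 < ε)
    (hb1 : ∀ x y : X, b x ≤ b y + dist x y)
    {x y : X} {γ : ℝ → X} (hγ : IsGeodesicSegWrt (distFun X) γ x y) (hxy : x ≠ y) :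
    confDistWrt (distFun X) (uniformizationDensity b ε) x y ≤
      2 / ε * Real.exp (-ε * Bq b x y + -Lam ε (dist x y)) := by
  have h := conf_le_combined hε hb1 hγ
  rw [← Lam_exp hε (dist_pos.mpr hxy), mul_assoc, ← Real.exp_add] at h
  exact h

private lemma conf_ge_exp {b : X → ℝ} {ε M δ' : ℝ} (hε : 0 < ε) (hδ' : 0 ≤ δ')
    (hM : 1 ≤ M) (hb1 : ∀ x y : X, b x ≤ b y + dist x y)
    (hgh : IsGHDensityWrt (distFun X) M (uniformizationDensity b ε))
    {x y : X} {γ : ℝ → X} (hγ : IsGeodesicSegWrt (distFun X) γ x y) (hxy : x ≠ y)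
    (hlow : ∃ t ∈ Icc 0 (dist x y), b (γ t) ≤ Bq b x y + 2 * δ') :
    1 / (4 * M * ε) * Real.exp (-ε * (Bq b x y + 2 * δ') + -Lam ε (dist x y)) ≤
      confDistWrt (distFun X) (uniformizationDensity b ε) x y := by
  have h := conf_lower_geo hε hδ' hM hb1 hgh hγ hlow
  refine le_trans (le_of_eq ?_) h
  rw [Real.exp_add, ← Lam_exp hε (dist_pos.mpr hxy)]
  have hM0 : (0:ℝ) < M := by linarith
  field_simp

/-- The quasimöbius estimate. -/
private lemma qm_one {b b' : X → ℝ} {ε ε' δ' K M : ℝ}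
    (hε : 0 < ε) (hε' : 0 < ε') (hδ' : 0 ≤ δ') (hM : 1 ≤ M)
    (hgs : GeodesicSpaceWrt (distFun X))
    (hgb : GoodB δ' K b) (hgb' : GoodB δ' K b')
    (hgh : IsGHDensityWrt (distFun X) M (uniformizationDensity b ε))
    (hgh' : IsGHDensityWrt (distFun X) M (uniformizationDensity b' ε'))
    (x y z w : X) (hxy : x ≠ y) (hxz : x ≠ z) (hxw : x ≠ w)
    (hyz : y ≠ z) (hyw : y ≠ w) (hzw : z ≠ w) :
    crossRatioWrt (confDistWrt (distFun X) (uniformizationDensity b' ε')) x y z w ≤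
      (64 * M ^ 2 * Real.exp (4 * ε' * δ') *
        Real.exp (1 + 2 * |Real.log (ε' / ε)| + |ε' / ε - ε / ε'| + |ε' / ε - 1|) *
        max ((64 * M ^ 2 * Real.exp (4 * ε * δ')) ^ (ε' / ε))
            ((64 * M ^ 2 * Real.exp (4 * ε * δ')) ^ (ε / ε'))) *
      max (crossRatioWrt (confDistWrt (distFun X) (uniformizationDensity b ε)) x y z w ^ (ε' / ε))
          (crossRatioWrt (confDistWrt (distFun X) (uniformizationDensity b ε)) x y z w ^ (ε / ε')) := by
  have hM0 : (0:ℝ) < M := by linarith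
  obtain ⟨γp, hγp⟩ := hgs x z
  obtain ⟨γq, hγq⟩ := hgs y w
  obtain ⟨γa, hγa⟩ := hgs x y
  obtain ⟨γbb, hγbb⟩ := hgs z w
  have hdp : 0 < dist x z := dist_pos.mpr hxz
  have hdq : 0 < dist y w := dist_pos.mpr hyw
  have hda : 0 < dist x y := dist_pos.mpr hxy
  have hdb : 0 < dist z w := dist_pos.mpr hzw
  -- exponential bounds in the target metric
  have u1 := conf_le_exp hε' hgb'.1 hγp hxz
  have u2 := conf_le_exp hε' hgb'.1 hγq hyw
  have l1 := conf_ge_exp hε' hδ' hM hgb'.1 hgh' hγa hxy (hgb'.2.1 x y γa hγa)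
  have l2 := conf_ge_exp hε' hδ' hM hgb'.1 hgh' hγbb hzw (hgb'.2.1 z w γbb hγbb)
  -- exponential bounds in the source metric
  have v1 := conf_ge_exp hε hδ' hM hgb.1 hgh hγp hxz (hgb.2.1 x z γp hγp)
  have v2 := conf_ge_exp hε hδ' hM hgb.1 hgh hγq hyw (hgb.2.1 y w γq hγq)
  have w1 := conf_le_exp hε hgb.1 hγa hxy
  have w2 := conf_le_exp hε hgb.1 hγbb hzw
  -- positivity
  have p1 := conf_pos hε' hgb'.1 hgs hxy
  have p2 := conf_pos hε' hgb'.1 hgs hzw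
  have q1 := conf_pos hε hgb.1 hgs hxz
  have q2 := conf_pos hε hgb.1 hgs hyw
  have q3 := conf_pos hε hgb.1 hgs hxy
  have q4 := conf_pos hε hgb.1 hgs hzw
  set D : ℝ := dist x z + dist y w - dist x y - dist z w with hD
  set S : ℝ := Lam ε (dist x y) + Lam ε (dist z w) - Lam ε (dist x z) - Lam ε (dist y w)
    with hS
  set S' : ℝ := Lam ε' (dist x y) + Lam ε' (dist z w) - Lam ε' (dist x z) - Lam ε' (dist y w)
    with hS'
  have hee : ∀ A1 A2 F1 F2 : ℝ,
      (2 / ε' * Real.exp A1 * (2 / ε' * Real.exp A2)) /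
        (1 / (4 * M * ε') * Real.exp F1 * (1 / (4 * M * ε') * Real.exp F2)) =
      64 * M ^ 2 * Real.exp (A1 + A2 - (F1 + F2)) := by
    intro A1 A2 F1 F2
    rw [Real.exp_sub, Real.exp_add, Real.exp_add]
    rw [div_eq_iff (by positivity)]
    field_simp [Real.exp_ne_zero]
    ring
  have hee2 : ∀ A1 A2 F1 F2 : ℝ,
      (1 / (4 * M * ε) * Real.exp A1 * (1 / (4 * M * ε) * Real.exp A2)) /
        (2 / ε * Real.exp F1 * (2 / ε * Real.exp F2)) =
      1 / (64 * M ^ 2) * Real.exp (A1 + A2 - (F1 + F2)) := by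
    intro A1 A2 F1 F2
    rw [Real.exp_sub, Real.exp_add, Real.exp_add]
    rw [div_eq_iff (by positivity)]
    field_simp [Real.exp_ne_zero]
    ring
  -- upper bound for the target cross-ratio
  have hcr'up : crossRatioWrt (confDistWrt (distFun X) (uniformizationDensity b' ε')) x y z w ≤
      64 * M ^ 2 * Real.exp (4 * ε' * δ') * Real.exp (ε' / 2 * D + S') := by
    have hnum : confDistWrt (distFun X) (uniformizationDensity b' ε') x z *
        confDistWrt (distFun X) (uniformizationDensity b' ε') y w ≤
        (2 / ε' * Real.exp (-ε' * Bq b' x z + -Lam ε' (dist x z))) *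
        (2 / ε' * Real.exp (-ε' * Bq b' y w + -Lam ε' (dist y w))) :=
      mul_le_mul u1 u2 (conf_nonneg b' ε' y w) (by positivity)
    have hden : (1 / (4 * M * ε') * Real.exp (-ε' * (Bq b' x y + 2 * δ') + -Lam ε' (dist x y))) *
        (1 / (4 * M * ε') * Real.exp (-ε' * (Bq b' z w + 2 * δ') + -Lam ε' (dist z w))) ≤
        confDistWrt (distFun X) (uniformizationDensity b' ε') x y *
        confDistWrt (distFun X) (uniformizationDensity b' ε') z w :=
      mul_le_mul l1 l2 (by positivity) p1.le
    have hstep : crossRatioWrt (confDistWrt (distFun X) (uniformizationDensity b' ε')) x y z w ≤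
        ((2 / ε' * Real.exp (-ε' * Bq b' x z + -Lam ε' (dist x z))) *
         (2 / ε' * Real.exp (-ε' * Bq b' y w + -Lam ε' (dist y w)))) /
        ((1 / (4 * M * ε') * Real.exp (-ε' * (Bq b' x y + 2 * δ') + -Lam ε' (dist x y))) *
         (1 / (4 * M * ε') * Real.exp (-ε' * (Bq b' z w + 2 * δ') + -Lam ε' (dist z w)))) :=
      div_le_div₀ (by positivity) hnum (by positivity) hden
    refine le_trans hstep (le_of_eq ?_)
    have hexpand : (-ε' * Bq b' x z + -Lam ε' (dist x z)) +
        (-ε' * Bq b' y w + -Lam ε' (dist y w)) -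
        ((-ε' * (Bq b' x y + 2 * δ') + -Lam ε' (dist x y)) +
         (-ε' * (Bq b' z w + 2 * δ') + -Lam ε' (dist z w))) =
        4 * ε' * δ' + (ε' / 2 * D + S') := by
      simp only [Bq, hD, hS']
      ring
    rw [hee, hexpand, Real.exp_add]
    ring
  -- lower bound for the source cross-ratio
  have hcrlow : Real.exp (ε / 2 * D + S) ≤ 64 * M ^ 2 * Real.exp (4 * ε * δ') *
      crossRatioWrt (confDistWrt (distFun X) (uniformizationDensity b ε)) x y z w := by
    have hnum : (1 / (4 * M * ε) * Real.exp (-ε * (Bq b x z + 2 * δ') + -Lam ε (dist x z))) *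
        (1 / (4 * M * ε) * Real.exp (-ε * (Bq b y w + 2 * δ') + -Lam ε (dist y w))) ≤
        confDistWrt (distFun X) (uniformizationDensity b ε) x z *
        confDistWrt (distFun X) (uniformizationDensity b ε) y w :=
      mul_le_mul v1 v2 (by positivity) q1.le
    have hden : confDistWrt (distFun X) (uniformizationDensity b ε) x y *
        confDistWrt (distFun X) (uniformizationDensity b ε) z w ≤
        (2 / ε * Real.exp (-ε * Bq b x y + -Lam ε (dist x y))) *
        (2 / ε * Real.exp (-ε * Bq b z w + -Lam ε (dist z w))) :=
      mul_le_mul w1 w2 q4.le (by positivity)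
    have hstep : ((1 / (4 * M * ε) * Real.exp (-ε * (Bq b x z + 2 * δ') + -Lam ε (dist x z))) *
        (1 / (4 * M * ε) * Real.exp (-ε * (Bq b y w + 2 * δ') + -Lam ε (dist y w)))) /
        ((2 / ε * Real.exp (-ε * Bq b x y + -Lam ε (dist x y))) *
         (2 / ε * Real.exp (-ε * Bq b z w + -Lam ε (dist z w)))) ≤
        crossRatioWrt (confDistWrt (distFun X) (uniformizationDensity b ε)) x y z w :=
      div_le_div₀ (by positivity) hnum (by positivity) hden
    have heq : ((1 / (4 * M * ε) * Real.exp (-ε * (Bq b x z + 2 * δ') + -Lam ε (dist x z))) *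
        (1 / (4 * M * ε) * Real.exp (-ε * (Bq b y w + 2 * δ') + -Lam ε (dist y w)))) /
        ((2 / ε * Real.exp (-ε * Bq b x y + -Lam ε (dist x y))) *
         (2 / ε * Real.exp (-ε * Bq b z w + -Lam ε (dist z w)))) =
        1 / (64 * M ^ 2) * Real.exp (-(4 * ε * δ') + (ε / 2 * D + S)) := by
      have hexpand : (-ε * (Bq b x z + 2 * δ') + -Lam ε (dist x z)) +
          (-ε * (Bq b y w + 2 * δ') + -Lam ε (dist y w)) -
          ((-ε * Bq b x y + -Lam ε (dist x y)) + (-ε * Bq b z w + -Lam ε (dist z w))) =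
          -(4 * ε * δ') + (ε / 2 * D + S) := by
        simp only [Bq, hD, hS]
        ring
      rw [hee2, hexpand]
    rw [heq] at hstep
    have hid : 64 * M ^ 2 * Real.exp (4 * ε * δ') *
        (1 / (64 * M ^ 2) * Real.exp (-(4 * ε * δ') + (ε / 2 * D + S))) =
        Real.exp (ε / 2 * D + S) := by
      rw [show Real.exp (-(4 * ε * δ') + (ε / 2 * D + S)) =
          Real.exp (-(4 * ε * δ')) * Real.exp (ε / 2 * D + S) by rw [← Real.exp_add]]
      rw [show Real.exp (-(4 * ε * δ')) = (Real.exp (4 * ε * δ'))⁻¹ by rw [← Real.exp_neg]]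
      field_simp [Real.exp_ne_zero]
    calc Real.exp (ε / 2 * D + S)
        = 64 * M ^ 2 * Real.exp (4 * ε * δ') *
          (1 / (64 * M ^ 2) * Real.exp (-(4 * ε * δ') + (ε / 2 * D + S))) := hid.symm
      _ ≤ 64 * M ^ 2 * Real.exp (4 * ε * δ') *
          crossRatioWrt (confDistWrt (distFun X) (uniformizationDensity b ε)) x y z w := by
          apply mul_le_mul_of_nonneg_left hstep (by positivity)
  -- triangle facts
  have t1 := dist_triangle4 y x z w
  have t2 := dist_triangle4 x y w z
  have t3 := dist_triangle4 z x y w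
  have t4 := dist_triangle4 x z w y
  have hyx : dist y x = dist x y := dist_comm _ _
  have hwz : dist w z = dist z w := dist_comm _ _
  have hzx : dist z x = dist x z := dist_comm _ _
  have hwy : dist w y = dist y w := dist_comm _ _
  have hR := lemR hε hε' hdp hdq hda hdb (by linarith) (by linarith) (by linarith) (by linarith)
  -- assemble
  set cr := crossRatioWrt (confDistWrt (distFun X) (uniformizationDensity b ε)) x y z w with hcr
  have hcrpos : 0 < cr := by
    rw [hcr]
    show 0 < confDistWrt (distFun X) (uniformizationDensity b ε) x z *
        confDistWrt (distFun X) (uniformizationDensity b ε) y w /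
        (confDistWrt (distFun X) (uniformizationDensity b ε) x y *
         confDistWrt (distFun X) (uniformizationDensity b ε) z w)
    positivity
  set KK := 64 * M ^ 2 * Real.exp (4 * ε * δ') with hKK
  have hKKpos : 0 < KK := by rw [hKK]; positivity
  have hexpG : Real.exp (ε / 2 * D + S) ≤ KK * cr := hcrlow
  have hcRmax : Real.exp (ε' / 2 * D + S') ≤
      Real.exp (1 + 2 * |Real.log (ε' / ε)| + |ε' / ε - ε / ε'| + |ε' / ε - 1|) *
      max (Real.exp ((ε' / ε) * (ε / 2 * D + S))) (Real.exp ((ε / ε') * (ε / 2 * D + S))) := by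
    have hmax : Real.exp (max ((ε' / ε) * (ε / 2 * D + S)) ((ε / ε') * (ε / 2 * D + S))) =
        max (Real.exp ((ε' / ε) * (ε / 2 * D + S))) (Real.exp ((ε / ε') * (ε / 2 * D + S))) :=
      Monotone.map_max Real.exp_monotone
    rw [← hmax, ← Real.exp_add]
    apply Real.exp_le_exp.mpr
    have := hR
    rw [hD, hS, hS'] at *
    linarith [hR]
  have hbr : ∀ c : ℝ, 0 ≤ c → Real.exp (c * (ε / 2 * D + S)) ≤ KK ^ c * cr ^ c := by
    intro c hc
    rw [mul_comm c, Real.exp_mul]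
    calc Real.exp (ε / 2 * D + S) ^ c ≤ (KK * cr) ^ c :=
        Real.rpow_le_rpow (Real.exp_pos _).le hexpG hc
      _ = KK ^ c * cr ^ c := Real.mul_rpow hKKpos.le hcrpos.le
  have ha1 : (0:ℝ) ≤ ε' / ε := by positivity
  have ha2 : (0:ℝ) ≤ ε / ε' := by positivity
  have hfin : max (Real.exp ((ε' / ε) * (ε / 2 * D + S))) (Real.exp ((ε / ε') * (ε / 2 * D + S))) ≤
      max (KK ^ (ε' / ε)) (KK ^ (ε / ε')) * max (cr ^ (ε' / ε)) (cr ^ (ε / ε')) := by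
    apply max_le
    · calc Real.exp ((ε' / ε) * (ε / 2 * D + S)) ≤ KK ^ (ε' / ε) * cr ^ (ε' / ε) :=
          hbr _ ha1
        _ ≤ max (KK ^ (ε' / ε)) (KK ^ (ε / ε')) * max (cr ^ (ε' / ε)) (cr ^ (ε / ε')) := by
          apply mul_le_mul (le_max_left _ _) (le_max_left _ _) (by positivity)
          positivity
    · calc Real.exp ((ε / ε') * (ε / 2 * D + S)) ≤ KK ^ (ε / ε') * cr ^ (ε / ε') :=
          hbr _ ha2
        _ ≤ max (KK ^ (ε' / ε)) (KK ^ (ε / ε')) * max (cr ^ (ε' / ε)) (cr ^ (ε / ε')) := by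
          apply mul_le_mul (le_max_right _ _) (le_max_right _ _) (by positivity)
          positivity
  calc crossRatioWrt (confDistWrt (distFun X) (uniformizationDensity b' ε')) x y z w
      ≤ 64 * M ^ 2 * Real.exp (4 * ε' * δ') * Real.exp (ε' / 2 * D + S') := hcr'up
    _ ≤ 64 * M ^ 2 * Real.exp (4 * ε' * δ') *
        (Real.exp (1 + 2 * |Real.log (ε' / ε)| + |ε' / ε - ε / ε'| + |ε' / ε - 1|) *
         (max (KK ^ (ε' / ε)) (KK ^ (ε / ε')) * max (cr ^ (ε' / ε)) (cr ^ (ε / ε')))) := by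
        apply mul_le_mul_of_nonneg_left ?_ (by positivity)
        refine le_trans hcRmax ?_
        apply mul_le_mul_of_nonneg_left hfin (Real.exp_pos _).le
    _ = (64 * M ^ 2 * Real.exp (4 * ε' * δ') *
        Real.exp (1 + 2 * |Real.log (ε' / ε)| + |ε' / ε - ε / ε'| + |ε' / ε - 1|) *
        max (KK ^ (ε' / ε)) (KK ^ (ε / ε'))) *
        max (cr ^ (ε' / ε)) (cr ^ (ε / ε')) := by ring

end Aux11
/-- For a proper geodesic `δ`-hyperbolic space `X` and `b, b' ∈ 𝔅̂(X)`
with `X` `K`-roughly starlike from both basepoints, and `ε, ε' > 0` such that `ρ_{ε,b}` and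
`ρ_{ε',b'}` are GH-densities with the same constant `M`, the identity map
`X_{ε,b} → X_{ε',b'}` is `∂`-biLipschitz with data `(L, λ)` and is `η`-quasimöbius with
`η(t) = C·max{t^{ε'/ε}, t^{ε/ε'}}`, where `L`, `λ`, `C` depend only on `δ, K, ε, ε', M`. -/
theorem statement3 (δ K ε ε' M : ℝ) (hδ : 0 ≤ δ) (hK : 0 ≤ K) (hε : 0 < ε) (hε' : 0 < ε')
    (hM : 1 ≤ M) :
    ∃ L lam C : ℝ, 1 ≤ L ∧ 0 < lam ∧ lam < 1 ∧ 0 < C ∧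
      ∀ (X : Type*) [MetricSpace X] [ProperSpace X],
        GeodesicSpaceWrt (distFun X) → DeltaHyperbolicWrt (distFun X) δ →
        ∀ b b' : X → ℝ,
          BhatStarlike (distFun X) K b → BhatStarlike (distFun X) K b' →
          IsGHDensityWrt (distFun X) M (uniformizationDensity b ε) →
          IsGHDensityWrt (distFun X) M (uniformizationDensity b' ε') →
          PartialBiLipschitzWrt (confDistWrt (distFun X) (uniformizationDensity b ε))
            (confDistWrt (distFun X) (uniformizationDensity b' ε')) L lam id id ∧
          QuasiMobiusWrt (confDistWrt (distFun X) (uniformizationDensity b ε))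
            (confDistWrt (distFun X) (uniformizationDensity b' ε'))
            (fun t => C * max (t ^ (ε' / ε)) (t ^ (ε / ε'))) id := by
  refine ⟨max 1 (max (LOne δ K M ε ε') (LOne δ K M ε' ε)),
    min (lamOne δ K ε) (lamOne δ K ε'),
    64 * M ^ 2 * Real.exp (4 * ε' * δ) *
      Real.exp (1 + 2 * |Real.log (ε' / ε)| + |ε' / ε - ε / ε'| + |ε' / ε - 1|) *
      max ((64 * M ^ 2 * Real.exp (4 * ε * δ)) ^ (ε' / ε))
          ((64 * M ^ 2 * Real.exp (4 * ε * δ)) ^ (ε / ε')),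
    le_max_left _ _, lt_min (lamOne_pos hK hε) (lamOne_pos hK hε'), ?_, ?_, ?_⟩
  · -- lam < 1
    calc min (lamOne δ K ε) (lamOne δ K ε') ≤ lamOne δ K ε := min_le_left _ _
      _ ≤ 1 / 2 := min_le_left _ _
      _ < 1 := by norm_num
  · -- 0 < C
    have hM0 : (0:ℝ) < M := by linarith
    have h1 : (0:ℝ) < 64 * M ^ 2 * Real.exp (4 * ε * δ) := by positivity
    have h2 : (0:ℝ) < (64 * M ^ 2 * Real.exp (4 * ε * δ)) ^ (ε' / ε) :=
      Real.rpow_pos_of_pos h1 _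
    have h3 : (0:ℝ) <
        max ((64 * M ^ 2 * Real.exp (4 * ε * δ)) ^ (ε' / ε))
          ((64 * M ^ 2 * Real.exp (4 * ε * δ)) ^ (ε / ε')) :=
      lt_max_of_lt_left h2
    positivity
  · intro X _ _ hgs hhyp b b' hb hb' hgh hgh'
    have hgb : GoodB δ K b := goodB_of_bhat hδ hgs hhyp hb
    have hgb' : GoodB δ K b' := goodB_of_bhat hδ hgs hhyp hb'
    constructor
    · refine ⟨le_max_left _ _, fun x => rfl, fun x => rfl, ?_, ?_⟩
      · -- forward ∂-Lipschitz
        intro x y z hy hz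
        simp only [id_eq]
        have hbd0 : 0 ≤ bdryDistWrt
            (confDistWrt (distFun X) (uniformizationDensity b ε)) x := by
          have h0 := conf_nonneg b ε y x
          by_contra hneg
          push_neg at hneg
          have hlampos := lt_min (lamOne_pos (δ' := δ) hK hε) (lamOne_pos (δ' := δ) hK hε')
          nlinarith
        have hconv : ∀ p : X,
            confDistWrt (distFun X) (uniformizationDensity b ε) p x <
              min (lamOne δ K ε) (lamOne δ K ε') *
              bdryDistWrt (confDistWrt (distFun X) (uniformizationDensity b ε)) x →
            confDistWrt (distFun X) (uniformizationDensity b ε) p x <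
              lamOne δ K ε *
              bdryDistWrt (confDistWrt (distFun X) (uniformizationDensity b ε)) x := by
          intro p hp
          exact lt_of_lt_of_le hp
            (mul_le_mul_of_nonneg_right (min_le_left _ _) hbd0)
        have hkey := partialLip_one hε hε' hδ hK hM hgs hgb hgb' hgh x y z
          (hconv y hy) (hconv z hz)
        refine le_trans hkey (mul_le_mul_of_nonneg_right ?_ ?_)
        · exact le_trans (le_max_left _ _) (le_max_right _ _)
        · apply div_nonneg (conf_nonneg b ε y z) hbd0
      · -- backward ∂-Lipschitz
        intro x y z hy hz
        simp only [id_eq]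
        have hbd0 : 0 ≤ bdryDistWrt
            (confDistWrt (distFun X) (uniformizationDensity b' ε')) x := by
          have h0 := conf_nonneg b' ε' y x
          by_contra hneg
          push_neg at hneg
          have hlampos := lt_min (lamOne_pos (δ' := δ) hK hε) (lamOne_pos (δ' := δ) hK hε')
          nlinarith
        have hconv : ∀ p : X,
            confDistWrt (distFun X) (uniformizationDensity b' ε') p x <
              min (lamOne δ K ε) (lamOne δ K ε') *
              bdryDistWrt (confDistWrt (distFun X) (uniformizationDensity b' ε')) x →
            confDistWrt (distFun X) (uniformizationDensity b' ε') p x <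
              lamOne δ K ε' *
              bdryDistWrt (confDistWrt (distFun X) (uniformizationDensity b' ε')) x := by
          intro p hp
          exact lt_of_lt_of_le hp
            (mul_le_mul_of_nonneg_right (min_le_right _ _) hbd0)
        have hkey := partialLip_one hε' hε hδ hK hM hgs hgb' hgb hgh' x y z
          (hconv y hy) (hconv z hz)
        refine le_trans hkey (mul_le_mul_of_nonneg_right ?_ ?_)
        · exact le_trans (le_max_right _ _) (le_max_right _ _)
        · apply div_nonneg (conf_nonneg b' ε' y z) hbd0
    · -- quasimöbius
      intro x y z w hxy hxz hxw hyz hyw hzw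
      simp only [id_eq]
      exact qm_one hε hε' hδ hM hgs hgb hgb' hgh hgh' x y z w hxy hxz hxw hyz hyw hzw

end Paper

end
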